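/- arXiv:2001.08492 — 3 statements merged into one kernel-verified Lean document; each statement's English description precedes it below -/
import Mathlib

section
/- Let q ≥ 2 be an integer, {X_n}_{n≥1} a stationary stochastic process with values in {0,...,q-1}, and F the CDF of X = Σ_{n≥1} X_n q^{-n}. Then the X_n are independent and identically distributed if and only if F(x) = Σ_{j=0}^{q-1} P(X₁ = j) F(qx − j) for all x ∈ [0,1]. -/
open MeasureTheory Filter Set Finset

namespace S14

variable {q : ℕ}

private lemma hq0 (hq : 2 ≤ q) : (0:ℝ) < q := by
  have : (0:ℕ) < q := by omega
  exact_mod_cast this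

private lemma hr0 (hq : 2 ≤ q) : (0:ℝ) < (q:ℝ)⁻¹ := inv_pos.2 (hq0 hq)

private lemma hr1 (hq : 2 ≤ q) : (q:ℝ)⁻¹ < 1 := by
  rw [inv_lt_one_iff₀]
  right
  exact_mod_cast by omega

private lemma hqr (hq : 2 ≤ q) : (q:ℝ) * (q:ℝ)⁻¹ = 1 :=
  mul_inv_cancel₀ (ne_of_gt (hq0 hq))

/-- summability of digit series -/
lemma summable_digits (hq : 2 ≤ q) {d : ℕ → ℕ} (hd : ∀ i, d i < q) :
    Summable (fun i => (d i : ℝ) * (q:ℝ)⁻¹ ^ (i+1)) := by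
  refine Summable.of_nonneg_of_le (fun i => by positivity) (fun i => ?_)
    (summable_geometric_of_lt_one (le_of_lt (hr0 hq)) (hr1 hq))
  have h1 : (d i : ℝ) ≤ (q:ℝ) := by exact_mod_cast (hd i).le
  calc (d i : ℝ) * (q:ℝ)⁻¹ ^ (i+1) ≤ (q:ℝ) * (q:ℝ)⁻¹ ^ (i+1) := by
        apply mul_le_mul_of_nonneg_right h1 (by positivity)
    _ = ((q:ℝ) * (q:ℝ)⁻¹) * (q:ℝ)⁻¹ ^ i := by ring
    _ = (q:ℝ)⁻¹ ^ i := by rw [hqr hq, one_mul]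

lemma summable_digits' (hq : 2 ≤ q) {d : ℕ → ℕ} (hd : ∀ i, d i < q) (m : ℕ) :
    Summable (fun i => (d (i+m) : ℝ) * (q:ℝ)⁻¹ ^ (i+m+1)) :=
  ((summable_nat_add_iff (f := fun i => (d i : ℝ) * (q:ℝ)⁻¹ ^ (i+1)) m).2
    (summable_digits hq hd))

/-- exact geometric tail -/
lemma geom_tail (hq : 2 ≤ q) (m : ℕ) :
    ∑' i:ℕ, ((q:ℝ) - 1) * (q:ℝ)⁻¹ ^ (i+m+1) = (q:ℝ)⁻¹ ^ m := by
  have h : ∀ i:ℕ, ((q:ℝ) - 1) * (q:ℝ)⁻¹ ^ (i+m+1)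
      = (((q:ℝ) - 1) * (q:ℝ)⁻¹ ^ (m+1)) * (q:ℝ)⁻¹ ^ i := by
    intro i; ring
  rw [tsum_congr h, tsum_mul_left, tsum_geometric_of_lt_one (le_of_lt (hr0 hq)) (hr1 hq)]
  have hne : (q:ℝ) ≠ 0 := ne_of_gt (hq0 hq)
  have hq1 : (q:ℝ) - 1 ≠ 0 := by
    have : (1:ℝ) < q := by exact_mod_cast by omega
    linarith
  have h1r : 1 - (q:ℝ)⁻¹ = ((q:ℝ) - 1) / q := by field_simp
  rw [h1r]
  field_simp
  ring_nf
  simp [hne]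

lemma summable_geom_tail (hq : 2 ≤ q) (m : ℕ) :
    Summable (fun i:ℕ => ((q:ℝ) - 1) * (q:ℝ)⁻¹ ^ (i+m+1)) := by
  have h : ∀ i:ℕ, ((q:ℝ) - 1) * (q:ℝ)⁻¹ ^ (i+m+1)
      = (((q:ℝ) - 1) * (q:ℝ)⁻¹ ^ (m+1)) * (q:ℝ)⁻¹ ^ i := by
    intro i; ring
  rw [funext h]
  exact (summable_geometric_of_lt_one (le_of_lt (hr0 hq)) (hr1 hq)).mul_left _

lemma digit_le (hq : 2 ≤ q) {d : ℕ → ℕ} (hd : ∀ i, d i < q) (i : ℕ) :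
    (d i : ℝ) ≤ (q:ℝ) - 1 := by
  have : d i + 1 ≤ q := hd i
  have : (d i : ℝ) + 1 ≤ (q:ℝ) := by exact_mod_cast this
  linarith

/-- tail bound -/
lemma tail_le (hq : 2 ≤ q) {d : ℕ → ℕ} (hd : ∀ i, d i < q) (m : ℕ) :
    ∑' i:ℕ, (d (i+m) : ℝ) * (q:ℝ)⁻¹ ^ (i+m+1) ≤ (q:ℝ)⁻¹ ^ m := by
  rw [← geom_tail hq m]
  refine Summable.tsum_le_tsum (fun i => ?_) (summable_digits' hq hd m) (summable_geom_tail hq m)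
  exact mul_le_mul_of_nonneg_right (digit_le hq hd _) (by positivity)

lemma tail_nonneg (hq : 2 ≤ q) (d : ℕ → ℕ) (m : ℕ) :
    0 ≤ ∑' i:ℕ, (d (i+m) : ℝ) * (q:ℝ)⁻¹ ^ (i+m+1) :=
  tsum_nonneg (fun i => by positivity)

lemma prefix_split (hq : 2 ≤ q) {d : ℕ → ℕ} (hd : ∀ i, d i < q) (m : ℕ) :
    ∑' i:ℕ, (d i : ℝ) * (q:ℝ)⁻¹ ^ (i+1)
      = (∑ i ∈ Finset.range m, (d i : ℝ) * (q:ℝ)⁻¹ ^ (i+1))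
        + ∑' i:ℕ, (d (i+m) : ℝ) * (q:ℝ)⁻¹ ^ (i+m+1) :=
  (Summable.sum_add_tsum_nat_add m (summable_digits hq hd)).symm

lemma val_nonneg (d : ℕ → ℕ) : 0 ≤ ∑' i:ℕ, (d i : ℝ) * (q:ℝ)⁻¹ ^ (i+1) :=
  tsum_nonneg (fun i => by positivity)

lemma val_le_one (hq : 2 ≤ q) {d : ℕ → ℕ} (hd : ∀ i, d i < q) :
    ∑' i:ℕ, (d i : ℝ) * (q:ℝ)⁻¹ ^ (i+1) ≤ 1 := by
  have := tail_le hq hd 0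
  simpa using this

end S14

namespace S14

lemma cyl_bounds (hq : 2 ≤ q) {d k : ℕ → ℕ} (hd : ∀ i, d i < q) {m : ℕ}
    (hdk : ∀ i < m, d i = k i) :
    (∑ i ∈ Finset.range m, (k i : ℝ) * (q:ℝ)⁻¹ ^ (i+1))
        ≤ ∑' i:ℕ, (d i : ℝ) * (q:ℝ)⁻¹ ^ (i+1)
    ∧ ∑' i:ℕ, (d i : ℝ) * (q:ℝ)⁻¹ ^ (i+1)
        ≤ (∑ i ∈ Finset.range m, (k i : ℝ) * (q:ℝ)⁻¹ ^ (i+1)) + (q:ℝ)⁻¹ ^ m := by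
  have hs : ∑ i ∈ Finset.range m, (d i:ℝ) * (q:ℝ)⁻¹ ^ (i+1)
      = ∑ i ∈ Finset.range m, (k i:ℝ) * (q:ℝ)⁻¹ ^ (i+1) :=
    Finset.sum_congr rfl (fun i hi => by rw [hdk i (Finset.mem_range.1 hi)])
  rw [prefix_split hq hd m, hs]
  constructor
  · linarith [tail_nonneg hq d m]
  · linarith [tail_le hq hd m]

lemma escape (hq : 2 ≤ q) {d k : ℕ → ℕ} (hd : ∀ i, d i < q) {m : ℕ}
    (hk : ∀ i < m, k i < q)
    (h1 : (∑ i ∈ Finset.range m, (k i : ℝ) * (q:ℝ)⁻¹ ^ (i+1))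
        ≤ ∑' i:ℕ, (d i : ℝ) * (q:ℝ)⁻¹ ^ (i+1))
    (h2 : ∑' i:ℕ, (d i : ℝ) * (q:ℝ)⁻¹ ^ (i+1)
        ≤ (∑ i ∈ Finset.range m, (k i : ℝ) * (q:ℝ)⁻¹ ^ (i+1)) + (q:ℝ)⁻¹ ^ m)
    (hne : ¬ ∀ i < m, d i = k i) :
    ((∃ M, ∀ n ≥ M, d n = 0) ∧ ¬(∀ n, d n = 0))
      ∨ ((∃ M, ∀ n ≥ M, d n = q - 1) ∧ ¬(∀ n, d n = q - 1)) := by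
  classical
  push_neg at hne
  obtain ⟨i₀, hi₀m, hi₀ne⟩ := hne
  have hex : ∃ i, i < m ∧ d i ≠ k i := ⟨i₀, hi₀m, hi₀ne⟩
  set i := Nat.find hex with hidef
  obtain ⟨him, hine⟩ := Nat.find_spec hex
  have hmin : ∀ l < i, d l = k l := by
    intro l hl
    have hthis := Nat.find_min hex hl
    push_neg at hthis
    exact hthis (lt_trans hl him)
  have him' : i + 1 ≤ m := him
  have hrp : (0:ℝ) < (q:ℝ)⁻¹ ^ (i+1) := by positivity
  have hVsplit : ∑' l:ℕ, (d l : ℝ) * (q:ℝ)⁻¹ ^ (l+1)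
      = (∑ l ∈ Finset.range i, (k l : ℝ) * (q:ℝ)⁻¹ ^ (l+1))
        + (d i : ℝ) * (q:ℝ)⁻¹ ^ (i+1)
        + ∑' l:ℕ, (d (l+(i+1)) : ℝ) * (q:ℝ)⁻¹ ^ (l+(i+1)+1) := by
    rw [prefix_split hq hd (i+1), Finset.sum_range_succ]
    congr 2
    exact Finset.sum_congr rfl (fun l hl => by rw [hmin l (Finset.mem_range.1 hl)])
  have hasplit : ∑ l ∈ Finset.range m, (k l : ℝ) * (q:ℝ)⁻¹ ^ (l+1)
      = (∑ l ∈ Finset.range i, (k l : ℝ) * (q:ℝ)⁻¹ ^ (l+1))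
        + (k i : ℝ) * (q:ℝ)⁻¹ ^ (i+1)
        + ∑ l ∈ Finset.Ico (i+1) m, (k l : ℝ) * (q:ℝ)⁻¹ ^ (l+1) := by
    rw [Finset.range_eq_Ico, ← Finset.sum_Ico_consecutive _ (Nat.zero_le (i+1)) him',
      ← Finset.range_eq_Ico, Finset.sum_range_succ]
  have hT0 : 0 ≤ ∑' l:ℕ, (d (l+(i+1)) : ℝ) * (q:ℝ)⁻¹ ^ (l+(i+1)+1) := tail_nonneg hq d (i+1)
  have hTle : ∑' l:ℕ, (d (l+(i+1)) : ℝ) * (q:ℝ)⁻¹ ^ (l+(i+1)+1) ≤ (q:ℝ)⁻¹ ^ (i+1) :=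
    tail_le hq hd (i+1)
  have hR0 : 0 ≤ ∑ l ∈ Finset.Ico (i+1) m, (k l : ℝ) * (q:ℝ)⁻¹ ^ (l+1) :=
    Finset.sum_nonneg (fun l _ => by positivity)
  have hterm : ∀ l : ℕ, ((q:ℝ)-1) * (q:ℝ)⁻¹ ^ (l+1) = (q:ℝ)⁻¹ ^ l - (q:ℝ)⁻¹ ^ (l+1) := by
    intro l
    have h := hqr hq
    calc ((q:ℝ)-1) * (q:ℝ)⁻¹ ^ (l+1) = ((q:ℝ) * (q:ℝ)⁻¹) * (q:ℝ)⁻¹ ^ l - (q:ℝ)⁻¹ ^ (l+1) := by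
          ring
      _ = (q:ℝ)⁻¹ ^ l - (q:ℝ)⁻¹ ^ (l+1) := by rw [h, one_mul]
  have htel : ∑ l ∈ Finset.Ico (i+1) m, ((q:ℝ)-1) * (q:ℝ)⁻¹ ^ (l+1)
      = (q:ℝ)⁻¹ ^ (i+1) - (q:ℝ)⁻¹ ^ m := by
    rw [Finset.sum_congr rfl (fun l _ => hterm l), Finset.sum_Ico_eq_sum_range]
    have := Finset.sum_range_sub' (f := fun j => (q:ℝ)⁻¹ ^ (i+1+j)) (m - (i+1))
    simp only [Nat.add_zero] at this
    calc ∑ j ∈ Finset.range (m-(i+1)), ((q:ℝ)⁻¹ ^ (i+1+j) - (q:ℝ)⁻¹ ^ (i+1+j+1))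
        = (q:ℝ)⁻¹ ^ (i+1+0) - (q:ℝ)⁻¹ ^ (i+1+(m-(i+1))) := by
          rw [← this]
          exact Finset.sum_congr rfl (fun j _ => by ring_nf)
      _ = (q:ℝ)⁻¹ ^ (i+1) - (q:ℝ)⁻¹ ^ m := by
          congr 1 <;> congr 1 <;> omega
  have hRle : (∑ l ∈ Finset.Ico (i+1) m, (k l : ℝ) * (q:ℝ)⁻¹ ^ (l+1)) + (q:ℝ)⁻¹ ^ m
      ≤ (q:ℝ)⁻¹ ^ (i+1) := by
    have hb : ∑ l ∈ Finset.Ico (i+1) m, (k l : ℝ) * (q:ℝ)⁻¹ ^ (l+1)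
        ≤ ∑ l ∈ Finset.Ico (i+1) m, ((q:ℝ)-1) * (q:ℝ)⁻¹ ^ (l+1) := by
      refine Finset.sum_le_sum (fun l hl => ?_)
      have hkl : k l < q := hk l (Finset.mem_Ico.1 hl).2
      have : (k l : ℝ) + 1 ≤ (q:ℝ) := by exact_mod_cast hkl
      have h2' : (k l : ℝ) ≤ (q:ℝ) - 1 := by linarith
      exact mul_le_mul_of_nonneg_right h2' (by positivity)
    rw [htel] at hb
    linarith
  rcases Nat.lt_or_ge (k i) (d i) with hgt | hge
  · -- digit too big: tail of d must be all zeros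
    have hdi : (k i:ℝ) + 1 ≤ (d i:ℝ) := by exact_mod_cast hgt
    have hprod : ((k i:ℝ) + 1) * (q:ℝ)⁻¹ ^ (i+1) ≤ (d i:ℝ) * (q:ℝ)⁻¹ ^ (i+1) :=
      mul_le_mul_of_nonneg_right hdi (le_of_lt hrp)
    rw [hVsplit] at h2
    rw [hasplit] at h2
    have hT0' : ∑' l:ℕ, (d (l+(i+1)) : ℝ) * (q:ℝ)⁻¹ ^ (l+(i+1)+1) ≤ 0 := by nlinarith
    have hT : ∑' l:ℕ, (d (l+(i+1)) : ℝ) * (q:ℝ)⁻¹ ^ (l+(i+1)+1) = 0 :=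
      le_antisymm hT0' hT0
    have hzero : ∀ l, d (l + (i+1)) = 0 := by
      intro l
      have hle := Summable.le_tsum (summable_digits' hq hd (i+1)) l (fun j _ => by positivity)
      rw [hT] at hle
      have h0 : (0:ℝ) ≤ (d (l+(i+1)) : ℝ) * (q:ℝ)⁻¹ ^ (l+(i+1)+1) := by positivity
      have heq0 : (d (l+(i+1)) : ℝ) * (q:ℝ)⁻¹ ^ (l+(i+1)+1) = 0 := le_antisymm hle h0
      have hpow : (0:ℝ) < (q:ℝ)⁻¹ ^ (l+(i+1)+1) := by positivity
      have : (d (l+(i+1)) : ℝ) = 0 := by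
        rcases mul_eq_zero.1 heq0 with h | h
        · exact h
        · exact absurd h (ne_of_gt hpow)
      exact_mod_cast this
    refine Or.inl ⟨⟨i+1, fun n hn => ?_⟩, fun hall => ?_⟩
    · have hneq : n - (i+1) + (i+1) = n := by omega
      rw [← hneq]; exact hzero _
    · have := hall i; omega
  · -- digit too small: tail of d must be all (q-1)
    have hlt2 : d i < k i := lt_of_le_of_ne hge hine
    have hki1 : (d i:ℝ) + 1 ≤ (k i:ℝ) := by exact_mod_cast hlt2
    have hprod : ((d i:ℝ) + 1) * (q:ℝ)⁻¹ ^ (i+1) ≤ (k i:ℝ) * (q:ℝ)⁻¹ ^ (i+1) :=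
      mul_le_mul_of_nonneg_right hki1 (le_of_lt hrp)
    rw [hVsplit] at h1
    rw [hasplit] at h1
    have hTge : (q:ℝ)⁻¹ ^ (i+1) ≤ ∑' l:ℕ, (d (l+(i+1)) : ℝ) * (q:ℝ)⁻¹ ^ (l+(i+1)+1) := by
      nlinarith
    have hT : ∑' l:ℕ, (d (l+(i+1)) : ℝ) * (q:ℝ)⁻¹ ^ (l+(i+1)+1) = (q:ℝ)⁻¹ ^ (i+1) :=
      le_antisymm hTle hTge
    have halltail : ∀ l, d (l + (i+1)) = q - 1 := by
      by_contra hc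
      push_neg at hc
      obtain ⟨l₀, hl₀⟩ := hc
      have hlt' : (d (l₀+(i+1)) : ℝ) < (q:ℝ) - 1 := by
        have h1' : d (l₀+(i+1)) + 2 ≤ q := by
          have := hd (l₀+(i+1)); omega
        have h2' : (d (l₀+(i+1)):ℝ) + 2 ≤ (q:ℝ) := by exact_mod_cast h1'
        linarith
      have hstrict : ∑' l:ℕ, (d (l+(i+1)) : ℝ) * (q:ℝ)⁻¹ ^ (l+(i+1)+1)
          < ∑' l:ℕ, ((q:ℝ)-1) * (q:ℝ)⁻¹ ^ (l+(i+1)+1) := by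
        refine Summable.tsum_lt_tsum_of_nonneg (fun b => by positivity) (fun b => ?_)
          (mul_lt_mul_of_pos_right hlt' (by positivity)) (summable_geom_tail hq (i+1))
        exact mul_le_mul_of_nonneg_right (digit_le hq hd _) (by positivity)
      rw [geom_tail hq (i+1), hT] at hstrict
      exact lt_irrefl _ hstrict
    refine Or.inr ⟨⟨i+1, fun n hn => ?_⟩, fun hall => ?_⟩
    · have hneq : n - (i+1) + (i+1) = n := by omega
      rw [← hneq]; exact halltail _
    · have h1' := hall i
      have h2' := hk i him
      omega

end S14

namespace S14

/-- cylinder sets in sequence space -/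
def Cyl : Set (Set (ℕ → ℕ)) := {A | ∃ (m : ℕ) (k : ℕ → ℕ), A = {s : ℕ → ℕ | ∀ i < m, s i = k i}}

lemma cyl_measurableSet (m : ℕ) (k : ℕ → ℕ) :
    MeasurableSet {s : ℕ → ℕ | ∀ i < m, s i = k i} := by
  have h : {s : ℕ → ℕ | ∀ i < m, s i = k i}
      = ⋂ i ∈ Finset.range m, (fun s : ℕ → ℕ => s i) ⁻¹' {k i} := by
    ext s; simp
  rw [h]
  exact MeasurableSet.biInter (Finset.range m).countable_toSet
    (fun i _ => (measurable_pi_apply i) (measurableSet_singleton _))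

lemma isPiSystem_Cyl : IsPiSystem Cyl := by
  rintro A ⟨m₁, k₁, rfl⟩ B ⟨m₂, k₂, rfl⟩ hne
  obtain ⟨s₀, hs₀⟩ := hne
  have hs₀A : ∀ i < m₁, s₀ i = k₁ i := hs₀.1
  have hs₀B : ∀ i < m₂, s₀ i = k₂ i := hs₀.2
  rcases le_total m₁ m₂ with h | h
  · refine ⟨m₂, k₂, ?_⟩
    ext s
    constructor
    · intro hs; exact hs.2
    · intro hs
      refine ⟨fun i hi => ?_, hs⟩
      rw [hs i (lt_of_lt_of_le hi h), ← hs₀B i (lt_of_lt_of_le hi h), hs₀A i hi]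
  · refine ⟨m₁, k₁, ?_⟩
    ext s
    constructor
    · intro hs; exact hs.1
    · intro hs
      refine ⟨hs, fun i hi => ?_⟩
      rw [hs i (lt_of_lt_of_le hi h), ← hs₀A i (lt_of_lt_of_le hi h), hs₀B i hi]

lemma pi_eq_generateFrom_Cyl :
    (inferInstance : MeasurableSpace (ℕ → ℕ)) = MeasurableSpace.generateFrom Cyl := by
  apply le_antisymm
  · have hsingle : ∀ (i k : ℕ), MeasurableSet[MeasurableSpace.generateFrom Cyl]
        ((fun s : ℕ → ℕ => s i) ⁻¹' {k}) := by
      intro i k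
      have h : (fun s : ℕ → ℕ => s i) ⁻¹' {k}
        = ⋃ v : {v : Fin (i+1) → ℕ // v ⟨i, Nat.lt_succ_self i⟩ = k},
          {s : ℕ → ℕ | ∀ l < i+1,
            s l = (fun n => if h : n < i+1 then (v : Fin (i+1) → ℕ) ⟨n, h⟩ else 0) l} := by
        ext s
        simp only [Set.mem_preimage, Set.mem_singleton_iff, Set.mem_iUnion, Set.mem_setOf_eq]
        constructor
        · intro hs
          refine ⟨⟨fun l => s l, by simpa using hs⟩, fun l hl => ?_⟩
          simp [hl]
        · rintro ⟨⟨v, hv⟩, hs⟩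
          have := hs i (Nat.lt_succ_self i)
          simpa [hv] using this
      rw [h]
      exact MeasurableSet.iUnion fun v =>
        MeasurableSpace.measurableSet_generateFrom ⟨i+1, _, rfl⟩
    have hcomap : ∀ i : ℕ, MeasurableSpace.comap (fun s : ℕ → ℕ => s i) inferInstance
        ≤ MeasurableSpace.generateFrom Cyl := by
      intro i s hs
      obtain ⟨B, -, rfl⟩ := hs
      have h : (fun s : ℕ → ℕ => s i) ⁻¹' B = ⋃ k ∈ B, (fun s : ℕ → ℕ => s i) ⁻¹' {k} := by
        ext; simp
      rw [h]
      exact MeasurableSet.biUnion (Set.to_countable B) (fun k _ => hsingle i k)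
    exact iSup_le hcomap
  · refine MeasurableSpace.generateFrom_le ?_
    rintro A ⟨m, k, rfl⟩
    exact cyl_measurableSet m k

lemma measure_ext_cyl {μ ν : Measure (ℕ → ℕ)} [IsFiniteMeasure μ] [IsFiniteMeasure ν]
    (h : ∀ (m : ℕ) (k : ℕ → ℕ),
      μ {s | ∀ i < m, s i = k i} = ν {s | ∀ i < m, s i = k i})
    (huniv : μ Set.univ = ν Set.univ) : μ = ν := by
  refine ext_of_generate_finite Cyl pi_eq_generateFrom_Cyl isPiSystem_Cyl ?_ huniv
  rintro A ⟨m, k, rfl⟩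
  exact h m k

end S14

namespace S14

section Main

variable {Ω : Type*} [MeasurableSpace Ω] (P : Measure Ω) [IsProbabilityMeasure P]
  {q : ℕ} (X : ℕ → Ω → ℕ)

/-- the shift map on sequence space -/
lemma meas_shift : Measurable (fun s : ℕ → ℕ => fun n => s (n+1)) :=
  measurable_pi_lambda _ (fun n => measurable_pi_apply (n+1))

lemma meas_seqm (hmeas : ∀ n, Measurable (X n)) (m : ℕ) :
    Measurable (fun ω => fun n => X (n+m) ω) :=
  measurable_pi_lambda _ (fun n => hmeas (n+m))

lemma map_seqm (hmeas : ∀ n, Measurable (X n))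
    (hstat : Measure.map (fun ω => fun n => X (n + 1) ω) P
      = Measure.map (fun ω => fun n => X n ω) P) (m : ℕ) :
    Measure.map (fun ω => fun n => X (n+m) ω) P
      = Measure.map (fun ω => fun n => X n ω) P := by
  induction m with
  | zero => rfl
  | succ m ih =>
      have hcomp : (fun ω => fun n => X (n+(m+1)) ω)
          = (fun s : ℕ → ℕ => fun n => s (n+1)) ∘ (fun ω => fun n => X (n+m) ω) := by
        funext ω n
        simp only [Function.comp_apply]
        congr 1
        omega
      rw [hcomp, ← Measure.map_map (meas_shift) (meas_seqm X hmeas m), ih,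
        Measure.map_map (meas_shift) (measurable_pi_lambda _ (fun n => hmeas n))]
      have h1 : ((fun s : ℕ → ℕ => fun n => s (n+1)) ∘ fun c n => X n c)
          = (fun ω => fun n => X (n+1) ω) := rfl
      rw [h1, hstat]

lemma marg (hmeas : ∀ n, Measurable (X n))
    (hstat : Measure.map (fun ω => fun n => X (n + 1) ω) P
      = Measure.map (fun ω => fun n => X n ω) P) (n : ℕ) :
    Measure.map (X n) P = Measure.map (X 0) P := by
  have h1 : X n = (fun s : ℕ → ℕ => s 0) ∘ (fun ω => fun m => X (m+n) ω) := by
    funext ω; simp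
  have h2 : X 0 = (fun s : ℕ → ℕ => s 0) ∘ (fun ω => fun m => X (m+0) ω) := by
    funext ω; simp
  rw [h1, h2, ← Measure.map_map (measurable_pi_apply 0) (meas_seqm X hmeas n),
    ← Measure.map_map (measurable_pi_apply 0) (meas_seqm X hmeas 0),
    map_seqm P X hmeas hstat n, map_seqm P X hmeas hstat 0]

/-- measurability of digit sums wrt any sigma algebra making the digits measurable -/
lemma meas_tsum_digits (hq : 2 ≤ q) {α : Type*} {m' : MeasurableSpace α} {D : ℕ → α → ℕ}
    (hD : ∀ n, Measurable[m'] (D n)) (hDval : ∀ n ω, D n ω < q) :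
    Measurable[m'] (fun ω => ∑' n, (D n ω : ℝ) * (q:ℝ)⁻¹ ^ (n+1)) := by
  have hsum : ∀ ω, Summable (fun n => (D n ω : ℝ) * (q:ℝ)⁻¹ ^ (n+1)) :=
    fun ω => summable_digits hq (fun i => hDval i ω)
  refine measurable_of_tendsto_metrizable
    (f := fun m ω => ∑ n ∈ Finset.range m, (D n ω : ℝ) * (q:ℝ)⁻¹ ^ (n+1))
    (fun m => Finset.measurable_sum _ (fun n _ =>
      ((measurable_from_top.comp (hD n)).mul_const _))) ?_
  rw [tendsto_pi_nhds]
  intro ω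
  exact (hsum ω).hasSum.tendsto_sum_nat

end Main

end S14
section Main2

open MeasureTheory Filter Set

namespace S14

variable {Ω : Type*} [MeasurableSpace Ω] (P : Measure Ω) [IsProbabilityMeasure P]
  {q : ℕ} (X : ℕ → Ω → ℕ)

lemma meas_G (hq : 2 ≤ q) :
    Measurable (fun s : ℕ → ℕ => ∑' n, ((min (s n) (q-1) : ℕ) : ℝ) * (q:ℝ)⁻¹ ^ (n+1)) :=
  meas_tsum_digits hq (fun n =>
    (measurable_from_top : Measurable (fun a : ℕ => min a (q-1))).comp (measurable_pi_apply n))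
    (fun n s => by have : min (s n) (q-1) ≤ q - 1 := min_le_right _ _; omega)

lemma G_comp (hq : 2 ≤ q) (hval : ∀ n ω, X n ω < q) (m : ℕ) :
    (fun s : ℕ → ℕ => ∑' n, ((min (s n) (q-1) : ℕ) : ℝ) * (q:ℝ)⁻¹ ^ (n+1))
        ∘ (fun ω => fun n => X (n+m) ω)
      = fun ω => ∑' n, (X (n+m) ω : ℝ) * (q:ℝ)⁻¹ ^ (n+1) := by
  funext ω
  simp only [Function.comp_apply]
  refine tsum_congr (fun n => ?_)
  have h : min (X (n+m) ω) (q-1) = X (n+m) ω := by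
    have := hval (n+m) ω; omega
  rw [h]


lemma meas_Vm (hq : 2 ≤ q) (hmeas : ∀ n, Measurable (X n)) (hval : ∀ n ω, X n ω < q) (m : ℕ) :
    Measurable (fun ω => ∑' n, (X (n+m) ω : ℝ) * (q:ℝ)⁻¹ ^ (n+1)) :=
  meas_tsum_digits hq (fun n => hmeas (n+m)) (fun n ω => hval (n+m) ω)

lemma law_Vm (hq : 2 ≤ q) (hmeas : ∀ n, Measurable (X n)) (hval : ∀ n ω, X n ω < q)
    (hstat : Measure.map (fun ω => fun n => X (n + 1) ω) P
      = Measure.map (fun ω => fun n => X n ω) P) (m : ℕ) :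
    Measure.map (fun ω => ∑' n, (X (n+m) ω : ℝ) * (q:ℝ)⁻¹ ^ (n+1)) P
      = Measure.map (fun ω => ∑' n, (X n ω : ℝ) * (q:ℝ)⁻¹ ^ (n+1)) P := by
  have h0 : (fun ω => ∑' n, (X n ω : ℝ) * (q:ℝ)⁻¹ ^ (n+1))
      = (fun ω => ∑' n, (X (n+0) ω : ℝ) * (q:ℝ)⁻¹ ^ (n+1)) := rfl
  rw [h0, ← G_comp X hq hval m, ← G_comp X hq hval 0,
    ← Measure.map_map (meas_G hq) (meas_seqm X hmeas m),
    ← Measure.map_map (meas_G hq) (meas_seqm X hmeas 0),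
    map_seqm P X hmeas hstat m, map_seqm P X hmeas hstat 0]

end S14

end Main2
section Main3

open MeasureTheory Filter Set Topology

namespace S14

variable {Ω : Type*} [MeasurableSpace Ω] (P : Measure Ω) [IsProbabilityMeasure P]
  {q : ℕ} (X : ℕ → Ω → ℕ)

lemma V_split (hq : 2 ≤ q) (hval : ∀ n ω, X n ω < q) (ω : Ω) :
    ∑' n, (X n ω : ℝ) * (q:ℝ)⁻¹ ^ (n+1)
      = (X 0 ω : ℝ) * (q:ℝ)⁻¹
        + (q:ℝ)⁻¹ * ∑' n, (X (n+1) ω : ℝ) * (q:ℝ)⁻¹ ^ (n+1) := by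
  have hsum := summable_digits hq (fun i => hval i ω)
  rw [Summable.tsum_eq_zero_add hsum]
  have h1 : ∑' n, (X (n+1) ω : ℝ) * (q:ℝ)⁻¹ ^ (n+1+1)
      = ∑' n, (q:ℝ)⁻¹ * ((X (n+1) ω : ℝ) * (q:ℝ)⁻¹ ^ (n+1)) := by
    refine tsum_congr (fun n => ?_); ring
  rw [h1, tsum_mul_left, pow_one]

/-- the key pointwise equivalence on the event `X 0 = j` -/
lemma V_le_iff (hq : 2 ≤ q) (hval : ∀ n ω, X n ω < q) (ω : Ω) (j : ℕ) (hj : X 0 ω = j)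
    (x : ℝ) :
    (∑' n, (X n ω : ℝ) * (q:ℝ)⁻¹ ^ (n+1)) ≤ x
      ↔ (∑' n, (X (n+1) ω : ℝ) * (q:ℝ)⁻¹ ^ (n+1)) ≤ (q:ℝ) * x - (j:ℝ) := by
  have hq0' : (0:ℝ) < q := hq0 hq
  have hqr' := hqr hq
  rw [V_split X hq hval ω, hj]
  constructor
  · intro h
    have h2 := mul_le_mul_of_nonneg_left h (le_of_lt hq0')
    rw [mul_add, ← mul_assoc, ← mul_assoc, hqr'] at h2
    nlinarith [h2]
  · intro h
    have h2 := mul_le_mul_of_nonneg_left h (le_of_lt (hr0 hq))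
    have hrq : (q:ℝ)⁻¹ * ((q:ℝ) * x - (j:ℝ)) = x - (j:ℝ) * (q:ℝ)⁻¹ := by
      field_simp
    rw [hrq] at h2
    linarith

lemma Z_nonneg (ω : Ω) : 0 ≤ ∑' n, (X (n+1) ω : ℝ) * (q:ℝ)⁻¹ ^ (n+1) :=
  val_nonneg _

lemma Z_le_one (hq : 2 ≤ q) (hval : ∀ n ω, X n ω < q) (ω : Ω) :
    ∑' n, (X (n+1) ω : ℝ) * (q:ℝ)⁻¹ ^ (n+1) ≤ 1 :=
  val_le_one hq (fun i => hval (i+1) ω)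

/-- partition of the CDF event according to the first digit -/
lemma partition (hq : 2 ≤ q) (hmeas : ∀ n, Measurable (X n)) (hval : ∀ n ω, X n ω < q)
    (x : ℝ) :
    P {ω | (∑' n, (X n ω : ℝ) * (q:ℝ)⁻¹ ^ (n+1)) ≤ x}
      = ∑ j ∈ Finset.range q, P ({ω | X 0 ω = j}
          ∩ {ω | (∑' n, (X (n+1) ω : ℝ) * (q:ℝ)⁻¹ ^ (n+1)) ≤ (q:ℝ) * x - (j:ℝ)}) := by
  have hset : {ω | (∑' n, (X n ω : ℝ) * (q:ℝ)⁻¹ ^ (n+1)) ≤ x}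
      = ⋃ j ∈ Finset.range q, ({ω | X 0 ω = j}
          ∩ {ω | (∑' n, (X (n+1) ω : ℝ) * (q:ℝ)⁻¹ ^ (n+1)) ≤ (q:ℝ) * x - (j:ℝ)}) := by
    ext ω
    simp only [Set.mem_setOf_eq, Set.mem_iUnion, Set.mem_inter_iff, Finset.mem_range]
    constructor
    · intro h
      exact ⟨X 0 ω, hval 0 ω, rfl, (V_le_iff X hq hval ω (X 0 ω) rfl x).1 h⟩
    · rintro ⟨j, hjq, hj, h⟩
      exact (V_le_iff X hq hval ω j hj x).2 h
  rw [hset]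
  refine measure_biUnion_finset ?_ ?_
  · intro i hi j hj hij
    refine Set.disjoint_left.2 ?_
    rintro ω ⟨h1, -⟩ ⟨h2, -⟩
    exact hij (h1 ▸ h2 ▸ rfl)
  · intro j hj
    exact ((hmeas 0) (measurableSet_singleton j)).inter
      ((meas_Vm X hq hmeas hval 1) measurableSet_Iic)

/-- the tail events are null -/
lemma tail_null (hmeas : ∀ n, Measurable (X n))
    (hstat : Measure.map (fun ω => fun n => X (n + 1) ω) P
      = Measure.map (fun ω => fun n => X n ω) P) (c : ℕ) :
    P {ω | (∃ M, ∀ n ≥ M, X (n+1) ω = c) ∧ ¬(∀ n, X (n+1) ω = c)} = 0 := by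
  set A : ℕ → Set Ω := fun m => {ω | ∀ n, X (n+m) ω = c} with hA
  have hAmeas : ∀ m, MeasurableSet (A m) := by
    intro m
    have : A m = ⋂ n, (X (n+m)) ⁻¹' {c} := by
      ext ω; simp [hA]
    rw [this]
    exact MeasurableSet.iInter (fun n => (hmeas (n+m)) (measurableSet_singleton c))
  have hS : MeasurableSet {s : ℕ → ℕ | ∀ n, s n = c} := by
    have : {s : ℕ → ℕ | ∀ n, s n = c} = ⋂ n, (fun s : ℕ → ℕ => s n) ⁻¹' {c} := by
      ext s; simp
    rw [this]
    exact MeasurableSet.iInter (fun n => (measurable_pi_apply n) (measurableSet_singleton c))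
  have hAmap : ∀ m, P (A m) = P (A 0) := by
    intro m
    have h1 : A m = (fun ω => fun n => X (n+m) ω) ⁻¹' {s | ∀ n, s n = c} := rfl
    have h2 : A 0 = (fun ω => fun n => X (n+0) ω) ⁻¹' {s | ∀ n, s n = c} := rfl
    rw [h1, h2, ← Measure.map_apply (meas_seqm X hmeas m) hS,
      ← Measure.map_apply (meas_seqm X hmeas 0) hS,
      map_seqm P X hmeas hstat m, map_seqm P X hmeas hstat 0]
  have hmono : Monotone A := by
    intro m m' hmm' ω hω n
    have h := hω (n + (m' - m))
    have : n + (m' - m) + m = n + m' := by omega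
    rwa [this] at h
  have hlim : Tendsto (P ∘ A) atTop (𝓝 (P (⋃ m, A m))) :=
    tendsto_measure_iUnion_atTop hmono
  have hconst : (P ∘ A) = fun _ => P (A 0) := funext (fun m => hAmap m)
  have hU : P (⋃ m, A m) = P (A 0) := by
    rw [hconst] at hlim
    exact (tendsto_nhds_unique tendsto_const_nhds hlim).symm
  have hsub : {ω | (∃ M, ∀ n ≥ M, X (n+1) ω = c) ∧ ¬(∀ n, X (n+1) ω = c)}
      ⊆ (⋃ m, A m) \ A 1 := by
    rintro ω ⟨⟨M, hM⟩, hnot⟩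
    refine ⟨Set.mem_iUnion.2 ⟨M+1, fun n => ?_⟩, fun hω => hnot (fun n => hω n)⟩
    have h1 : n + (M + 1) = (n + M) + 1 := by omega
    rw [h1]
    exact hM (n + M) (by omega)
  refine measure_mono_null hsub ?_
  have hdiff : P ((⋃ m, A m) \ A 1) = P (⋃ m, A m) - P (A 1) :=
    measure_diff (le_iSup A 1) (hAmeas 1).nullMeasurableSet (measure_ne_top P _)
  rw [hdiff, hU, hAmap 1, tsub_self]

end S14

end Main3
section Main4

open MeasureTheory Filter Set Topology

namespace S14

/-- small cancellation helper -/
lemma cancel_sum {q j : ℕ} (hj : j < q) (f g : ℕ → ℝ)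
    (hsum : ∑ i ∈ Finset.range q, f i = ∑ i ∈ Finset.range q, g i)
    (hoff : ∀ i ∈ (Finset.range q).erase j, f i = g i) : f j = g j := by
  have hjmem : j ∈ Finset.range q := Finset.mem_range.2 hj
  rw [← Finset.add_sum_erase _ _ hjmem, ← Finset.add_sum_erase _ _ hjmem] at hsum
  have := Finset.sum_congr rfl hoff
  linarith

/-- from a product rule for the cdf on (0,1), get the product rule for all
reals, for a `[0,1]`-valued random variable -/
lemma indep_of_cdf_eq {Ω : Type*} [MeasurableSpace Ω] (P : Measure Ω) [IsProbabilityMeasure P]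
    (E : Set Ω) (Z : Ω → ℝ) (hmE : MeasurableSet E) (hmZ : Measurable Z)
    (hZ0 : ∀ ω, 0 ≤ Z ω) (hZ1 : ∀ ω, Z ω ≤ 1)
    (hpos : ∀ s : ℝ, 0 < s → s < 1 →
      (P (E ∩ Z ⁻¹' (Set.Iic s))).toReal = (P E).toReal * (P (Z ⁻¹' (Set.Iic s))).toReal)
    (t : ℝ) : P (E ∩ Z ⁻¹' (Set.Iic t)) = P E * P (Z ⁻¹' (Set.Iic t)) := by
  have hempty : ∀ s : ℝ, s < 0 → Z ⁻¹' (Set.Iic s) = ∅ := by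
    intro s hs
    ext ω
    simp only [Set.mem_preimage, Set.mem_Iic, Set.mem_empty_iff_false, iff_false, not_le]
    exact lt_of_lt_of_le hs (hZ0 ω)
  have huniv : ∀ s : ℝ, 1 ≤ s → Z ⁻¹' (Set.Iic s) = Set.univ := by
    intro s hs
    ext ω
    simp only [Set.mem_preimage, Set.mem_Iic, Set.mem_univ, iff_true]
    exact le_trans (hZ1 ω) hs
  have st1 : ∀ s : ℝ, 0 < s →
      (P (E ∩ Z ⁻¹' (Set.Iic s))).toReal = (P E).toReal * (P (Z ⁻¹' (Set.Iic s))).toReal := by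
    intro s hs
    rcases le_or_gt 1 s with hs1 | hs1
    · rw [huniv s hs1, Set.inter_univ, measure_univ]
      simp
    · exact hpos s hs hs1
  rcases lt_trichotomy t 0 with ht | ht
  · rw [hempty t ht, Set.inter_empty, measure_empty, mul_zero]
  · have htoReal : (P (E ∩ Z ⁻¹' (Set.Iic t))).toReal
        = (P E).toReal * (P (Z ⁻¹' (Set.Iic t))).toReal := by
      rcases ht with rfl | ht
      · have hanti : Antitone (fun n : ℕ => Z ⁻¹' (Set.Iic (1/((n:ℝ)+1)))) := by
          intro n m hnm ω hω
          simp only [Set.mem_preimage, Set.mem_Iic] at hω ⊢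
          refine le_trans hω ?_
          apply one_div_le_one_div_of_le
          · positivity
          · exact_mod_cast Nat.add_le_add_right hnm 1
        have hInter1 : ⋂ n : ℕ, (E ∩ Z ⁻¹' (Set.Iic (1/((n:ℝ)+1))))
            = E ∩ Z ⁻¹' (Set.Iic 0) := by
          ext ω
          simp only [Set.mem_iInter, Set.mem_inter_iff, Set.mem_preimage, Set.mem_Iic]
          constructor
          · intro h
            exact ⟨(h 0).1,
              ge_of_tendsto' tendsto_one_div_add_atTop_nhds_zero_nat (fun n => (h n).2)⟩
          · rintro ⟨h1, h2⟩ n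
            exact ⟨h1, le_trans h2 (by positivity)⟩
        have hInter2 : ⋂ n : ℕ, Z ⁻¹' (Set.Iic (1/((n:ℝ)+1))) = Z ⁻¹' (Set.Iic 0) := by
          ext ω
          simp only [Set.mem_iInter, Set.mem_preimage, Set.mem_Iic]
          constructor
          · intro h
            exact ge_of_tendsto' tendsto_one_div_add_atTop_nhds_zero_nat h
          · intro h2 n
            exact le_trans h2 (by positivity)
        have hlim1 : Tendsto (fun n : ℕ => P (E ∩ Z ⁻¹' (Set.Iic (1/((n:ℝ)+1))))) atTop
            (𝓝 (P (E ∩ Z ⁻¹' (Set.Iic 0)))) := by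
          have h := tendsto_measure_iInter_atTop
            (s := fun n : ℕ => E ∩ Z ⁻¹' (Set.Iic (1/((n:ℝ)+1))))
            (fun n => (hmE.inter (hmZ measurableSet_Iic)).nullMeasurableSet)
            (fun n m hnm => Set.inter_subset_inter_right _ (hanti hnm))
            ⟨0, measure_ne_top P _⟩
          rwa [hInter1] at h
        have hlim2 : Tendsto (fun n : ℕ => P (Z ⁻¹' (Set.Iic (1/((n:ℝ)+1))))) atTop
            (𝓝 (P (Z ⁻¹' (Set.Iic 0)))) := by
          have h := tendsto_measure_iInter_atTop
            (s := fun n : ℕ => Z ⁻¹' (Set.Iic (1/((n:ℝ)+1))))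
            (fun n => (hmZ measurableSet_Iic).nullMeasurableSet) hanti
            ⟨0, measure_ne_top P _⟩
          rwa [hInter2] at h
        have h1 : Tendsto (fun n : ℕ => (P (E ∩ Z ⁻¹' (Set.Iic (1/((n:ℝ)+1))))).toReal) atTop
            (𝓝 (P (E ∩ Z ⁻¹' (Set.Iic 0))).toReal) :=
          (ENNReal.tendsto_toReal (measure_ne_top P _)).comp hlim1
        have h2 : Tendsto (fun n : ℕ => (P E).toReal * (P (Z ⁻¹' (Set.Iic (1/((n:ℝ)+1))))).toReal)
            atTop (𝓝 ((P E).toReal * (P (Z ⁻¹' (Set.Iic 0))).toReal)) :=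
          ((ENNReal.tendsto_toReal (measure_ne_top P _)).comp hlim2).const_mul _
        have heqseq : (fun n : ℕ => (P (E ∩ Z ⁻¹' (Set.Iic (1/((n:ℝ)+1))))).toReal)
            = fun n : ℕ => (P E).toReal * (P (Z ⁻¹' (Set.Iic (1/((n:ℝ)+1))))).toReal :=
          funext (fun n => st1 _ (by positivity))
        rw [heqseq] at h1
        exact tendsto_nhds_unique h1 h2
      · exact st1 t ht
    have hne1 : P (E ∩ Z ⁻¹' (Set.Iic t)) ≠ ⊤ := measure_ne_top P _
    have hne2 : P E * P (Z ⁻¹' (Set.Iic t)) ≠ ⊤ :=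
      ENNReal.mul_ne_top (measure_ne_top P _) (measure_ne_top P _)
    rw [← ENNReal.toReal_eq_toReal_iff' hne1 hne2, ENNReal.toReal_mul]
    exact htoReal

variable {Ω : Type*} [MeasurableSpace Ω] (P : Measure Ω) [IsProbabilityMeasure P]
  {q : ℕ} (X : ℕ → Ω → ℕ)

lemma key_ennreal (hq : 2 ≤ q) (hmeas : ∀ n, Measurable (X n)) (hval : ∀ n ω, X n ω < q)
    (hstat : Measure.map (fun ω => fun n => X (n + 1) ω) P
      = Measure.map (fun ω => fun n => X n ω) P)
    (hfe : ∀ x ∈ Set.Icc (0:ℝ) 1,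
      (P {ω | (∑' n, (X n ω : ℝ) * (q:ℝ)⁻¹ ^ (n+1)) ≤ x}).toReal
        = ∑ j ∈ Finset.range q, (P {ω | X 0 ω = j}).toReal
            * (P {ω | (∑' n, (X n ω : ℝ) * (q:ℝ)⁻¹ ^ (n+1)) ≤ (q:ℝ)*x - (j:ℝ)}).toReal)
    (j : ℕ) (t : ℝ) :
    P ({ω | X 0 ω = j} ∩ {ω | (∑' n, (X (n+1) ω : ℝ) * (q:ℝ)⁻¹ ^ (n+1)) ≤ t})
      = P {ω | X 0 ω = j}
        * P {ω | (∑' n, (X (n+1) ω : ℝ) * (q:ℝ)⁻¹ ^ (n+1)) ≤ t} := by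
  have hmeasZ : Measurable (fun ω => ∑' n, (X (n+1) ω : ℝ) * (q:ℝ)⁻¹ ^ (n+1)) :=
    meas_Vm X hq hmeas hval 1
  by_cases hj : j < q
  swap
  · have hempty : {ω : Ω | X 0 ω = j} = ∅ := by
      ext ω
      simp only [Set.mem_setOf_eq, Set.mem_empty_iff_false, iff_false]
      intro h
      exact hj (h ▸ hval 0 ω)
    rw [hempty, Set.empty_inter, measure_empty, zero_mul]
  have hmeasV : Measurable (fun ω => ∑' n, (X n ω : ℝ) * (q:ℝ)⁻¹ ^ (n+1)) :=
    meas_Vm X hq hmeas hval 0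
  have hlaw : Measure.map (fun ω => ∑' n, (X (n+1) ω : ℝ) * (q:ℝ)⁻¹ ^ (n+1)) P
      = Measure.map (fun ω => ∑' n, (X n ω : ℝ) * (q:ℝ)⁻¹ ^ (n+1)) P :=
    law_Vm P X hq hmeas hval hstat 1
  have hZV : ∀ s : ℝ, P {ω | (∑' n, (X (n+1) ω : ℝ) * (q:ℝ)⁻¹ ^ (n+1)) ≤ s}
      = P {ω | (∑' n, (X n ω : ℝ) * (q:ℝ)⁻¹ ^ (n+1)) ≤ s} := by
    intro s
    calc P {ω | (∑' n, (X (n+1) ω : ℝ) * (q:ℝ)⁻¹ ^ (n+1)) ≤ s}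
        = (Measure.map (fun ω => ∑' n, (X (n+1) ω : ℝ) * (q:ℝ)⁻¹ ^ (n+1)) P) (Set.Iic s) :=
          (Measure.map_apply hmeasZ measurableSet_Iic).symm
      _ = (Measure.map (fun ω => ∑' n, (X n ω : ℝ) * (q:ℝ)⁻¹ ^ (n+1)) P) (Set.Iic s) := by
          rw [hlaw]
      _ = P {ω | (∑' n, (X n ω : ℝ) * (q:ℝ)⁻¹ ^ (n+1)) ≤ s} :=
          Measure.map_apply hmeasV measurableSet_Iic
  -- product rule on (0,1)
  have hpos : ∀ s : ℝ, 0 < s → s < 1 →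
      (P ({ω | X 0 ω = j}
          ∩ (fun ω => ∑' n, (X (n+1) ω : ℝ) * (q:ℝ)⁻¹ ^ (n+1)) ⁻¹' (Set.Iic s))).toReal
        = (P {ω | X 0 ω = j}).toReal
          * (P ((fun ω => ∑' n, (X (n+1) ω : ℝ) * (q:ℝ)⁻¹ ^ (n+1)) ⁻¹' (Set.Iic s))).toReal := by
    intro s hs0 hs1
    have hq0' : (0:ℝ) < q := hq0 hq
    set x : ℝ := (s + j) / q with hxdef
    have hjq : (j:ℝ) + 1 ≤ (q:ℝ) := by exact_mod_cast hj
    have hx : x ∈ Set.Icc (0:ℝ) 1 := by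
      constructor
      · apply div_nonneg _ (le_of_lt hq0')
        positivity
      · rw [div_le_one hq0']
        linarith
    have heval : (q:ℝ) * x - (j:ℝ) = s := by
      rw [hxdef]
      field_simp
      ring
    have hsum : ∑ i ∈ Finset.range q,
          (P ({ω | X 0 ω = i}
            ∩ {ω | (∑' n, (X (n+1) ω : ℝ) * (q:ℝ)⁻¹ ^ (n+1)) ≤ (q:ℝ)*x - (i:ℝ)})).toReal
        = ∑ i ∈ Finset.range q, (P {ω | X 0 ω = i}).toReal
            * (P {ω | (∑' n, (X (n+1) ω : ℝ) * (q:ℝ)⁻¹ ^ (n+1)) ≤ (q:ℝ)*x - (i:ℝ)}).toReal := by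
      have h1 := hfe x hx
      rw [partition P X hq hmeas hval x,
        ENNReal.toReal_sum (fun i _ => measure_ne_top P _)] at h1
      rw [h1]
      refine Finset.sum_congr rfl (fun i _ => ?_)
      rw [hZV ((q:ℝ)*x - (i:ℝ))]
    have hoff : ∀ i ∈ (Finset.range q).erase j,
        (P ({ω | X 0 ω = i}
            ∩ {ω | (∑' n, (X (n+1) ω : ℝ) * (q:ℝ)⁻¹ ^ (n+1)) ≤ (q:ℝ)*x - (i:ℝ)})).toReal
          = (P {ω | X 0 ω = i}).toReal
            * (P {ω | (∑' n, (X (n+1) ω : ℝ) * (q:ℝ)⁻¹ ^ (n+1)) ≤ (q:ℝ)*x - (i:ℝ)}).toReal := by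
      intro i hi
      have hine : i ≠ j := Finset.ne_of_mem_erase hi
      have hsi : (q:ℝ)*x - (i:ℝ) = s + ((j:ℝ) - (i:ℝ)) := by
        rw [← heval]; ring
      rcases lt_or_gt_of_ne hine with hlt | hgt
      · have h1 : (i:ℝ) + 1 ≤ (j:ℝ) := by exact_mod_cast hlt
        have hge : (1:ℝ) ≤ (q:ℝ)*x - (i:ℝ) := by rw [hsi]; linarith
        have huniv : {ω : Ω | (∑' n, (X (n+1) ω : ℝ) * (q:ℝ)⁻¹ ^ (n+1)) ≤ (q:ℝ)*x - (i:ℝ)}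
            = Set.univ := by
          ext ω
          simp only [Set.mem_setOf_eq, Set.mem_univ, iff_true]
          exact le_trans (Z_le_one X hq hval ω) hge
        rw [huniv, Set.inter_univ, measure_univ]
        simp
      · have h1 : (j:ℝ) + 1 ≤ (i:ℝ) := by exact_mod_cast hgt
        have hlt0 : (q:ℝ)*x - (i:ℝ) < 0 := by rw [hsi]; linarith
        have hempty : {ω : Ω | (∑' n, (X (n+1) ω : ℝ) * (q:ℝ)⁻¹ ^ (n+1)) ≤ (q:ℝ)*x - (i:ℝ)}
            = ∅ := by
          ext ω
          simp only [Set.mem_setOf_eq, Set.mem_empty_iff_false, iff_false, not_le]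
          exact lt_of_lt_of_le hlt0 (Z_nonneg X ω)
        rw [hempty, Set.inter_empty, measure_empty]
        simp
    have hjeq := cancel_sum hj
      (fun i => (P ({ω | X 0 ω = i}
          ∩ {ω | (∑' n, (X (n+1) ω : ℝ) * (q:ℝ)⁻¹ ^ (n+1)) ≤ (q:ℝ)*x - (i:ℝ)})).toReal)
      (fun i => (P {ω | X 0 ω = i}).toReal
          * (P {ω | (∑' n, (X (n+1) ω : ℝ) * (q:ℝ)⁻¹ ^ (n+1)) ≤ (q:ℝ)*x - (i:ℝ)}).toReal)
      hsum hoff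
    rw [heval] at hjeq
    exact hjeq
  exact indep_of_cdf_eq P {ω | X 0 ω = j} (fun ω => ∑' n, (X (n+1) ω : ℝ) * (q:ℝ)⁻¹ ^ (n+1))
    ((hmeas 0) (measurableSet_singleton j)) hmeasZ (fun ω => Z_nonneg X ω)
    (fun ω => Z_le_one X hq hval ω) hpos t

end S14

end Main4
section Main5

open MeasureTheory Filter Set Topology

namespace S14

variable {Ω : Type*} [MeasurableSpace Ω] (P : Measure Ω) [IsProbabilityMeasure P]
  {q : ℕ} (X : ℕ → Ω → ℕ)

/-- extension of the product rule from Iic to all measurable sets -/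
lemma key_sets (hq : 2 ≤ q) (hmeas : ∀ n, Measurable (X n)) (hval : ∀ n ω, X n ω < q)
    (hstat : Measure.map (fun ω => fun n => X (n + 1) ω) P
      = Measure.map (fun ω => fun n => X n ω) P)
    (hfe : ∀ x ∈ Set.Icc (0:ℝ) 1,
      (P {ω | (∑' n, (X n ω : ℝ) * (q:ℝ)⁻¹ ^ (n+1)) ≤ x}).toReal
        = ∑ j ∈ Finset.range q, (P {ω | X 0 ω = j}).toReal
            * (P {ω | (∑' n, (X n ω : ℝ) * (q:ℝ)⁻¹ ^ (n+1)) ≤ (q:ℝ)*x - (j:ℝ)}).toReal)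
    (j : ℕ) (A : Set ℝ) (hA : MeasurableSet A) :
    P ({ω | X 0 ω = j} ∩ (fun ω => ∑' n, (X (n+1) ω : ℝ) * (q:ℝ)⁻¹ ^ (n+1)) ⁻¹' A)
      = P {ω | X 0 ω = j}
        * P ((fun ω => ∑' n, (X (n+1) ω : ℝ) * (q:ℝ)⁻¹ ^ (n+1)) ⁻¹' A) := by
  have hmeasZ : Measurable (fun ω => ∑' n, (X (n+1) ω : ℝ) * (q:ℝ)⁻¹ ^ (n+1)) :=
    meas_Vm X hq hmeas hval 1
  have hmE : MeasurableSet {ω : Ω | X 0 ω = j} := (hmeas 0) (measurableSet_singleton j)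
  set μ₁ : Measure ℝ :=
    Measure.map (fun ω => ∑' n, (X (n+1) ω : ℝ) * (q:ℝ)⁻¹ ^ (n+1)) (P.restrict {ω | X 0 ω = j})
    with hμ₁
  set ν₁ : Measure ℝ :=
    (P {ω | X 0 ω = j})
      • Measure.map (fun ω => ∑' n, (X (n+1) ω : ℝ) * (q:ℝ)⁻¹ ^ (n+1)) P with hν₁
  haveI : IsFiniteMeasure μ₁ := by
    rw [hμ₁]
    exact Measure.isFiniteMeasure_map _ _
  haveI : IsFiniteMeasure ν₁ := by
    rw [hν₁]
    refine ⟨?_⟩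
    rw [Measure.smul_apply, smul_eq_mul]
    exact ENNReal.mul_lt_top (measure_lt_top P _)
      (Measure.isFiniteMeasure_map _ _ |>.measure_univ_lt_top)
  have happly : ∀ (B : Set ℝ), MeasurableSet B →
      μ₁ B = P ({ω | X 0 ω = j}
        ∩ (fun ω => ∑' n, (X (n+1) ω : ℝ) * (q:ℝ)⁻¹ ^ (n+1)) ⁻¹' B) := by
    intro B hB
    rw [hμ₁, Measure.map_apply hmeasZ hB, Measure.restrict_apply (hmeasZ hB), Set.inter_comm]
  have happly' : ∀ (B : Set ℝ), MeasurableSet B →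
      ν₁ B = P {ω | X 0 ω = j}
        * P ((fun ω => ∑' n, (X (n+1) ω : ℝ) * (q:ℝ)⁻¹ ^ (n+1)) ⁻¹' B) := by
    intro B hB
    rw [hν₁, Measure.smul_apply, smul_eq_mul, Measure.map_apply hmeasZ hB]
  have hext : μ₁ = ν₁ := by
    refine Measure.ext_of_Iic μ₁ ν₁ (fun a => ?_)
    rw [happly _ measurableSet_Iic, happly' _ measurableSet_Iic]
    exact key_ennreal P X hq hmeas hval hstat hfe j a
  rw [← happly A hA, ← happly' A hA, hext]

/-- cylinder sets for the shifted digits agree with Z-intervals up to null sets -/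
lemma cyl_interval (hq : 2 ≤ q) (hmeas : ∀ n, Measurable (X n)) (hval : ∀ n ω, X n ω < q)
    (hstat : Measure.map (fun ω => fun n => X (n + 1) ω) P
      = Measure.map (fun ω => fun n => X n ω) P)
    (m : ℕ) (k : ℕ → ℕ) (hk : ∀ i < m, k i < q) (E : Set Ω) :
    P (E ∩ {ω | ∀ i < m, X (i+1) ω = k i})
      = P (E ∩ (fun ω => ∑' n, (X (n+1) ω : ℝ) * (q:ℝ)⁻¹ ^ (n+1)) ⁻¹'
          (Set.Icc (∑ i ∈ Finset.range m, (k i : ℝ) * (q:ℝ)⁻¹ ^ (i+1))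
            ((∑ i ∈ Finset.range m, (k i : ℝ) * (q:ℝ)⁻¹ ^ (i+1)) + (q:ℝ)⁻¹ ^ m))) := by
  set a : ℝ := ∑ i ∈ Finset.range m, (k i : ℝ) * (q:ℝ)⁻¹ ^ (i+1) with ha
  have hsub1 : {ω : Ω | ∀ i < m, X (i+1) ω = k i}
      ⊆ (fun ω => ∑' n, (X (n+1) ω : ℝ) * (q:ℝ)⁻¹ ^ (n+1)) ⁻¹' (Set.Icc a (a + (q:ℝ)⁻¹ ^ m)) := by
    intro ω hω
    have h := cyl_bounds hq (d := fun n => X (n+1) ω) (fun i => hval (i+1) ω) hω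
    exact ⟨h.1, h.2⟩
  have hsub2 : (fun ω => ∑' n, (X (n+1) ω : ℝ) * (q:ℝ)⁻¹ ^ (n+1)) ⁻¹'
        (Set.Icc a (a + (q:ℝ)⁻¹ ^ m)) \ {ω : Ω | ∀ i < m, X (i+1) ω = k i}
      ⊆ {ω | (∃ M, ∀ n ≥ M, X (n+1) ω = 0) ∧ ¬(∀ n, X (n+1) ω = 0)}
        ∪ {ω | (∃ M, ∀ n ≥ M, X (n+1) ω = q-1) ∧ ¬(∀ n, X (n+1) ω = q-1)} := by
    rintro ω ⟨hmem, hnot⟩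
    have h := escape hq (d := fun n => X (n+1) ω) (fun i => hval (i+1) ω) hk
      hmem.1 hmem.2 hnot
    rcases h with h | h
    · exact Or.inl h
    · exact Or.inr h
  have hnull : P ({ω | (∃ M, ∀ n ≥ M, X (n+1) ω = 0) ∧ ¬(∀ n, X (n+1) ω = 0)}
      ∪ {ω | (∃ M, ∀ n ≥ M, X (n+1) ω = q-1) ∧ ¬(∀ n, X (n+1) ω = q-1)}) = 0 :=
    measure_union_null (tail_null P X hmeas hstat 0) (tail_null P X hmeas hstat (q-1))
  refine le_antisymm ?_ ?_
  · exact measure_mono (Set.inter_subset_inter_right E hsub1)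
  · calc P (E ∩ (fun ω => ∑' n, (X (n+1) ω : ℝ) * (q:ℝ)⁻¹ ^ (n+1)) ⁻¹'
          (Set.Icc a (a + (q:ℝ)⁻¹ ^ m)))
        ≤ P ((E ∩ {ω | ∀ i < m, X (i+1) ω = k i})
            ∪ ({ω | (∃ M, ∀ n ≥ M, X (n+1) ω = 0) ∧ ¬(∀ n, X (n+1) ω = 0)}
              ∪ {ω | (∃ M, ∀ n ≥ M, X (n+1) ω = q-1) ∧ ¬(∀ n, X (n+1) ω = q-1)})) := by
          refine measure_mono ?_
          rintro ω ⟨hE, hI⟩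
          by_cases hc : ∀ i < m, X (i+1) ω = k i
          · exact Or.inl ⟨hE, hc⟩
          · exact Or.inr (hsub2 ⟨hI, hc⟩)
      _ ≤ P (E ∩ {ω | ∀ i < m, X (i+1) ω = k i}) + 0 := by
          refine le_trans (measure_union_le _ _) ?_
          rw [hnull]
      _ = P (E ∩ {ω | ∀ i < m, X (i+1) ω = k i}) := by rw [add_zero]

/-- independence of the first digit from shifted cylinders -/
lemma indep_cyl (hq : 2 ≤ q) (hmeas : ∀ n, Measurable (X n)) (hval : ∀ n ω, X n ω < q)
    (hstat : Measure.map (fun ω => fun n => X (n + 1) ω) P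
      = Measure.map (fun ω => fun n => X n ω) P)
    (hfe : ∀ x ∈ Set.Icc (0:ℝ) 1,
      (P {ω | (∑' n, (X n ω : ℝ) * (q:ℝ)⁻¹ ^ (n+1)) ≤ x}).toReal
        = ∑ j ∈ Finset.range q, (P {ω | X 0 ω = j}).toReal
            * (P {ω | (∑' n, (X n ω : ℝ) * (q:ℝ)⁻¹ ^ (n+1)) ≤ (q:ℝ)*x - (j:ℝ)}).toReal)
    (j : ℕ) (m : ℕ) (k : ℕ → ℕ) :
    P ({ω | X 0 ω = j} ∩ {ω | ∀ i < m, X (i+1) ω = k i})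
      = P {ω | X 0 ω = j} * P {ω | ∀ i < m, X (i+1) ω = k i} := by
  by_cases hk : ∀ i < m, k i < q
  · rw [cyl_interval P X hq hmeas hval hstat m k hk {ω | X 0 ω = j},
      key_sets P X hq hmeas hval hstat hfe j _ measurableSet_Icc]
    congr 1
    have h := cyl_interval P X hq hmeas hval hstat m k hk Set.univ
    rw [Set.univ_inter, Set.univ_inter] at h
    exact h.symm
  · push_neg at hk
    obtain ⟨i₀, hi₀, hk₀⟩ := hk
    have hempty : {ω : Ω | ∀ i < m, X (i+1) ω = k i} = ∅ := by
      ext ω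
      simp only [Set.mem_setOf_eq, Set.mem_empty_iff_false, iff_false]
      intro h
      have := hval (i₀+1) ω
      rw [h i₀ hi₀] at this
      omega
    rw [hempty, Set.inter_empty, measure_empty, mul_zero]

/-- independence of the first digit from the whole shifted sequence -/
lemma indep_shift (hq : 2 ≤ q) (hmeas : ∀ n, Measurable (X n)) (hval : ∀ n ω, X n ω < q)
    (hstat : Measure.map (fun ω => fun n => X (n + 1) ω) P
      = Measure.map (fun ω => fun n => X n ω) P)
    (hfe : ∀ x ∈ Set.Icc (0:ℝ) 1,
      (P {ω | (∑' n, (X n ω : ℝ) * (q:ℝ)⁻¹ ^ (n+1)) ≤ x}).toReal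
        = ∑ j ∈ Finset.range q, (P {ω | X 0 ω = j}).toReal
            * (P {ω | (∑' n, (X n ω : ℝ) * (q:ℝ)⁻¹ ^ (n+1)) ≤ (q:ℝ)*x - (j:ℝ)}).toReal)
    (j : ℕ) (A : Set (ℕ → ℕ)) (hA : MeasurableSet A) :
    P ({ω | X 0 ω = j} ∩ (fun ω => fun n => X (n+1) ω) ⁻¹' A)
      = P {ω | X 0 ω = j} * P ((fun ω => fun n => X (n+1) ω) ⁻¹' A) := by
  have hmeasS : Measurable (fun ω => fun n : ℕ => X (n+1) ω) := meas_seqm X hmeas 1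
  have hmE : MeasurableSet {ω : Ω | X 0 ω = j} := (hmeas 0) (measurableSet_singleton j)
  set μ₂ : Measure (ℕ → ℕ) :=
    Measure.map (fun ω => fun n : ℕ => X (n+1) ω) (P.restrict {ω | X 0 ω = j}) with hμ₂
  set ν₂ : Measure (ℕ → ℕ) :=
    (P {ω | X 0 ω = j}) • Measure.map (fun ω => fun n : ℕ => X (n+1) ω) P with hν₂
  haveI : IsFiniteMeasure μ₂ := by
    rw [hμ₂]; exact Measure.isFiniteMeasure_map _ _
  haveI : IsFiniteMeasure ν₂ := by
    rw [hν₂]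
    refine ⟨?_⟩
    rw [Measure.smul_apply, smul_eq_mul]
    exact ENNReal.mul_lt_top (measure_lt_top P _)
      (Measure.isFiniteMeasure_map _ _ |>.measure_univ_lt_top)
  have happly : ∀ (B : Set (ℕ → ℕ)), MeasurableSet B →
      μ₂ B = P ({ω | X 0 ω = j} ∩ (fun ω => fun n : ℕ => X (n+1) ω) ⁻¹' B) := by
    intro B hB
    rw [hμ₂, Measure.map_apply hmeasS hB, Measure.restrict_apply (hmeasS hB), Set.inter_comm]
  have happly' : ∀ (B : Set (ℕ → ℕ)), MeasurableSet B →
      ν₂ B = P {ω | X 0 ω = j} * P ((fun ω => fun n : ℕ => X (n+1) ω) ⁻¹' B) := by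
    intro B hB
    rw [hν₂, Measure.smul_apply, smul_eq_mul, Measure.map_apply hmeasS hB]
  have hext : μ₂ = ν₂ := by
    refine measure_ext_cyl (fun m k => ?_) ?_
    · rw [happly _ (cyl_measurableSet m k), happly' _ (cyl_measurableSet m k)]
      have hpre : (fun ω => fun n : ℕ => X (n+1) ω) ⁻¹' {s | ∀ i < m, s i = k i}
          = {ω | ∀ i < m, X (i+1) ω = k i} := rfl
      rw [hpre]
      exact indep_cyl P X hq hmeas hval hstat hfe j m k
    · rw [happly _ MeasurableSet.univ, happly' _ MeasurableSet.univ]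
      simp
  rw [← happly A hA, ← happly' A hA, hext]

end S14

end Main5
section Main6

open MeasureTheory Filter Set Topology

namespace S14

variable {Ω : Type*} [MeasurableSpace Ω] (P : Measure Ω) [IsProbabilityMeasure P]
  {q : ℕ} (X : ℕ → Ω → ℕ)

lemma indep_shift_set (hq : 2 ≤ q) (hmeas : ∀ n, Measurable (X n)) (hval : ∀ n ω, X n ω < q)
    (hstat : Measure.map (fun ω => fun n => X (n + 1) ω) P
      = Measure.map (fun ω => fun n => X n ω) P)
    (hfe : ∀ x ∈ Set.Icc (0:ℝ) 1,
      (P {ω | (∑' n, (X n ω : ℝ) * (q:ℝ)⁻¹ ^ (n+1)) ≤ x}).toReal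
        = ∑ j ∈ Finset.range q, (P {ω | X 0 ω = j}).toReal
            * (P {ω | (∑' n, (X n ω : ℝ) * (q:ℝ)⁻¹ ^ (n+1)) ≤ (q:ℝ)*x - (j:ℝ)}).toReal)
    (B : Set ℕ) (A : Set (ℕ → ℕ)) (hA : MeasurableSet A) :
    P ((X 0) ⁻¹' B ∩ (fun ω => fun n => X (n+1) ω) ⁻¹' A)
      = P ((X 0) ⁻¹' B) * P ((fun ω => fun n => X (n+1) ω) ⁻¹' A) := by
  have hmeasS : Measurable (fun ω => fun n : ℕ => X (n+1) ω) := meas_seqm X hmeas 1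
  have hXB : (X 0) ⁻¹' B = ⋃ j ∈ B, {ω | X 0 ω = j} := by
    ext ω; simp [Set.mem_iUnion]
  have hdisj : B.PairwiseDisjoint (fun j => {ω | X 0 ω = j}) := by
    intro i _ j _ hij
    refine Set.disjoint_left.2 ?_
    rintro ω h1 h2
    simp only [Set.mem_setOf_eq] at h1 h2
    exact hij (h1 ▸ h2 ▸ rfl)
  have hdisj2 : B.PairwiseDisjoint
      (fun j => {ω | X 0 ω = j} ∩ (fun ω => fun n : ℕ => X (n+1) ω) ⁻¹' A) := by
    intro i hi j hj hij
    exact Set.disjoint_of_subset Set.inter_subset_left Set.inter_subset_left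
      (hdisj hi hj hij)
  have h1 : (X 0) ⁻¹' B ∩ (fun ω => fun n : ℕ => X (n+1) ω) ⁻¹' A
      = ⋃ j ∈ B, ({ω | X 0 ω = j} ∩ (fun ω => fun n : ℕ => X (n+1) ω) ⁻¹' A) := by
    rw [hXB, Set.iUnion₂_inter]
  rw [h1, hXB,
    measure_biUnion (Set.to_countable B) hdisj2
      (fun j _ => ((hmeas 0) (measurableSet_singleton j)).inter (hmeasS hA)),
    measure_biUnion (Set.to_countable B) hdisj
      (fun j _ => (hmeas 0) (measurableSet_singleton j))]
  rw [← ENNReal.tsum_mul_right]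
  exact tsum_congr (fun j => indep_shift P X hq hmeas hval hstat hfe j A hA)

lemma prod_range (hq : 2 ≤ q) (hmeas : ∀ n, Measurable (X n)) (hval : ∀ n ω, X n ω < q)
    (hstat : Measure.map (fun ω => fun n => X (n + 1) ω) P
      = Measure.map (fun ω => fun n => X n ω) P)
    (hfe : ∀ x ∈ Set.Icc (0:ℝ) 1,
      (P {ω | (∑' n, (X n ω : ℝ) * (q:ℝ)⁻¹ ^ (n+1)) ≤ x}).toReal
        = ∑ j ∈ Finset.range q, (P {ω | X 0 ω = j}).toReal
            * (P {ω | (∑' n, (X n ω : ℝ) * (q:ℝ)⁻¹ ^ (n+1)) ≤ (q:ℝ)*x - (j:ℝ)}).toReal)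
    (m : ℕ) (B : ℕ → Set ℕ) :
    P {ω | ∀ i < m, X i ω ∈ B i} = ∏ i ∈ Finset.range m, P ((X i) ⁻¹' (B i)) := by
  induction m generalizing B with
  | zero =>
      have h : {ω : Ω | ∀ i < 0, X i ω ∈ B i} = Set.univ := by
        ext ω; simp
      rw [h]
      simp
  | succ m ih =>
      have hA : MeasurableSet {s : ℕ → ℕ | ∀ i < m, s i ∈ B (i+1)} := by
        have h : {s : ℕ → ℕ | ∀ i < m, s i ∈ B (i+1)}
            = ⋂ i ∈ Finset.range m, (fun s : ℕ → ℕ => s i) ⁻¹' (B (i+1)) := by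
          ext s; simp
        rw [h]
        exact MeasurableSet.biInter (Finset.range m).countable_toSet
          (fun i _ => (measurable_pi_apply i) trivial)
      have hsplit : {ω : Ω | ∀ i < m+1, X i ω ∈ B i}
          = (X 0) ⁻¹' (B 0) ∩ (fun ω => fun n => X (n+1) ω) ⁻¹' {s | ∀ i < m, s i ∈ B (i+1)} := by
        ext ω
        simp only [Set.mem_setOf_eq, Set.mem_inter_iff, Set.mem_preimage]
        constructor
        · intro h
          exact ⟨h 0 (by omega), fun i hi => h (i+1) (by omega)⟩
        · rintro ⟨h0, h⟩ i hi
          rcases Nat.eq_zero_or_pos i with rfl | hipos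
          · exact h0
          · have : i - 1 < m := by omega
            have h2 := h (i-1) this
            have : i - 1 + 1 = i := by omega
            rwa [this] at h2
      rw [hsplit, indep_shift_set P X hq hmeas hval hstat hfe (B 0) _ hA]
      have hmapeq : P ((fun ω => fun n => X (n+1) ω) ⁻¹' {s | ∀ i < m, s i ∈ B (i+1)})
          = P {ω | ∀ i < m, X i ω ∈ B (i+1)} := by
        rw [← Measure.map_apply (meas_seqm X hmeas 1) hA]
        have h1 := map_seqm P X hmeas hstat 1
        rw [h1, Measure.map_apply (measurable_pi_lambda _ (fun n => hmeas n)) hA]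
        rfl
      rw [hmapeq, ih (fun i => B (i+1))]
      have hmarg : ∀ i (C : Set ℕ), P ((X i) ⁻¹' C) = P ((X (i+1)) ⁻¹' C) := by
        intro i C
        rw [← Measure.map_apply (hmeas i) trivial, ← Measure.map_apply (hmeas (i+1)) trivial,
          marg P X hmeas hstat i, marg P X hmeas hstat (i+1)]
      rw [Finset.prod_range_succ', mul_comm]
      congr 1
      exact Finset.prod_congr rfl (fun i _ => hmarg i (B (i+1)))

lemma iIndep_of_fe (hq : 2 ≤ q) (hmeas : ∀ n, Measurable (X n)) (hval : ∀ n ω, X n ω < q)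
    (hstat : Measure.map (fun ω => fun n => X (n + 1) ω) P
      = Measure.map (fun ω => fun n => X n ω) P)
    (hfe : ∀ x ∈ Set.Icc (0:ℝ) 1,
      (P {ω | (∑' n, (X n ω : ℝ) * (q:ℝ)⁻¹ ^ (n+1)) ≤ x}).toReal
        = ∑ j ∈ Finset.range q, (P {ω | X 0 ω = j}).toReal
            * (P {ω | (∑' n, (X n ω : ℝ) * (q:ℝ)⁻¹ ^ (n+1)) ≤ (q:ℝ)*x - (j:ℝ)}).toReal) :
    ProbabilityTheory.iIndepFun X P := by
  classical
  rw [ProbabilityTheory.iIndepFun_iff_measure_inter_preimage_eq_mul]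
  intro S sets _
  set M : ℕ := S.sup id + 1 with hM
  have hsub : S ⊆ Finset.range M := Finset.subset_range_sup_succ S
  set B : ℕ → Set ℕ := fun i => if i ∈ S then sets i else Set.univ with hB
  have hset : (⋂ i ∈ S, (X i) ⁻¹' (sets i)) = {ω | ∀ i < M, X i ω ∈ B i} := by
    ext ω
    simp only [Set.mem_iInter, Set.mem_preimage, Set.mem_setOf_eq]
    constructor
    · intro h i hi
      by_cases hiS : i ∈ S
      · rw [hB]; simp only [hiS, if_true]; exact h i hiS
      · rw [hB]; simp [hiS]
    · intro h i hiS
      have hiM : i < M := Finset.mem_range.1 (hsub hiS)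
      have := h i hiM
      rw [hB] at this
      simpa [hiS] using this
  rw [hset, prod_range P X hq hmeas hval hstat hfe M B]
  refine (Finset.prod_subset hsub ?_).symm.trans (Finset.prod_congr rfl ?_)
  · intro i _ hiS
    have : B i = Set.univ := by rw [hB]; simp [hiS]
    rw [this]
    simp
  · intro i hiS
    have : B i = sets i := by rw [hB]; simp [hiS]
    rw [this]

end S14

end Main6
section Main7

open MeasureTheory Filter Set Topology

namespace S14

variable {Ω : Type*} [MeasurableSpace Ω] (P : Measure Ω) [IsProbabilityMeasure P]
  {q : ℕ} (X : ℕ → Ω → ℕ)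

lemma forward (hq : 2 ≤ q) (hmeas : ∀ n, Measurable (X n)) (hval : ∀ n ω, X n ω < q)
    (hstat : Measure.map (fun ω => fun n => X (n + 1) ω) P
      = Measure.map (fun ω => fun n => X n ω) P)
    (hind : ProbabilityTheory.iIndepFun X P) (x : ℝ) :
    (P {ω | (∑' n, (X n ω : ℝ) * (q:ℝ)⁻¹ ^ (n+1)) ≤ x}).toReal
      = ∑ j ∈ Finset.range q, (P {ω | X 0 ω = j}).toReal
          * (P {ω | (∑' n, (X n ω : ℝ) * (q:ℝ)⁻¹ ^ (n+1)) ≤ (q:ℝ)*x - (j:ℝ)}).toReal := by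
  have hindep : ProbabilityTheory.Indep
      (⨆ i ∈ ({0} : Set ℕ), MeasurableSpace.comap (X i) inferInstance)
      (⨆ i ∈ ({0}ᶜ : Set ℕ), MeasurableSpace.comap (X i) inferInstance) P :=
    ProbabilityTheory.indep_iSup_of_disjoint (fun i => (hmeas i).comap_le) hind
      disjoint_compl_right
  have hmZ' : Measurable[⨆ i ∈ ({0}ᶜ : Set ℕ), MeasurableSpace.comap (X i) inferInstance]
      (fun ω => ∑' n, (X (n+1) ω : ℝ) * (q:ℝ)⁻¹ ^ (n+1)) := by
    refine meas_tsum_digits hq (D := fun n => X (n+1)) ?_ (fun n ω => hval (n+1) ω)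
    intro n
    refine Measurable.of_comap_le
      (le_biSup (f := fun i : ℕ => MeasurableSpace.comap (X i) inferInstance)
        (show (n+1) ∈ ({0}ᶜ : Set ℕ) by simp))
  have hprod : ∀ (j : ℕ) (t : ℝ),
      P ({ω | X 0 ω = j} ∩ {ω | (∑' n, (X (n+1) ω:ℝ) * (q:ℝ)⁻¹ ^ (n+1)) ≤ t})
        = P {ω | X 0 ω = j} * P {ω | (∑' n, (X (n+1) ω:ℝ) * (q:ℝ)⁻¹ ^ (n+1)) ≤ t} := by
    intro j t
    refine (ProbabilityTheory.Indep_iff _ _ _).1 hindep _ _ ?_ ?_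
    · have h0 : MeasurableSpace.comap (X 0) inferInstance
          ≤ ⨆ i ∈ ({0}:Set ℕ), MeasurableSpace.comap (X i) inferInstance :=
        le_biSup (f := fun i : ℕ => MeasurableSpace.comap (X i) inferInstance)
          (Set.mem_singleton 0)
      exact h0 _ ⟨{j}, trivial, rfl⟩
    · exact hmZ' measurableSet_Iic
  have hlaw : Measure.map (fun ω => ∑' n, (X (n+1) ω : ℝ) * (q:ℝ)⁻¹ ^ (n+1)) P
      = Measure.map (fun ω => ∑' n, (X n ω : ℝ) * (q:ℝ)⁻¹ ^ (n+1)) P :=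
    law_Vm P X hq hmeas hval hstat 1
  have hZV : ∀ s : ℝ, P {ω | (∑' n, (X (n+1) ω : ℝ) * (q:ℝ)⁻¹ ^ (n+1)) ≤ s}
      = P {ω | (∑' n, (X n ω : ℝ) * (q:ℝ)⁻¹ ^ (n+1)) ≤ s} := by
    intro s
    calc P {ω | (∑' n, (X (n+1) ω : ℝ) * (q:ℝ)⁻¹ ^ (n+1)) ≤ s}
        = (Measure.map (fun ω => ∑' n, (X (n+1) ω : ℝ) * (q:ℝ)⁻¹ ^ (n+1)) P) (Set.Iic s) :=
          (Measure.map_apply (meas_Vm X hq hmeas hval 1) measurableSet_Iic).symm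
      _ = (Measure.map (fun ω => ∑' n, (X n ω : ℝ) * (q:ℝ)⁻¹ ^ (n+1)) P) (Set.Iic s) := by
          rw [hlaw]
      _ = P {ω | (∑' n, (X n ω : ℝ) * (q:ℝ)⁻¹ ^ (n+1)) ≤ s} :=
          Measure.map_apply (meas_Vm X hq hmeas hval 0) measurableSet_Iic
  rw [partition P X hq hmeas hval x, ENNReal.toReal_sum (fun i _ => measure_ne_top P _)]
  refine Finset.sum_congr rfl (fun j _ => ?_)
  rw [hprod j _, ENNReal.toReal_mul, hZV]

end S14

end Main7

open MeasureTheory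

/-- Under stationarity, the digits are IID if and only if the CDF satisfies the
self-similarity equation `F(x) = Σ_j P(X₁=j) F(qx−j)` on `[0,1]`. -/
theorem stmt_14 {Ω : Type*} [MeasurableSpace Ω] (P : Measure Ω) [IsProbabilityMeasure P]
    (q : ℕ) (hq : 2 ≤ q) (X : ℕ → Ω → ℕ)
    (hmeas : ∀ n, Measurable (X n)) (hval : ∀ n ω, X n ω < q)
    (hstat : Measure.map (fun ω => fun n => X (n + 1) ω) P
      = Measure.map (fun ω => fun n => X n ω) P)
    (Y : Ω → ℝ) (hY : ∀ ω, Y ω = ∑' n : ℕ, (X n ω : ℝ) / (q : ℝ) ^ (n + 1))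
    (F : ℝ → ℝ) (hF : ∀ x, F x = (P {ω | Y ω ≤ x}).toReal) :
    (ProbabilityTheory.iIndepFun X P
        ∧ ∀ n, Measure.map (X n) P = Measure.map (X 0) P)
      ↔ ∀ x ∈ Set.Icc (0 : ℝ) 1,
          F x = ∑ j ∈ Finset.range q, (P {ω | X 0 ω = j}).toReal * F (q * x - j) := by
  have hYV : ∀ ω, Y ω = ∑' n, (X n ω : ℝ) * (q:ℝ)⁻¹ ^ (n+1) := by
    intro ω
    rw [hY ω]
    exact tsum_congr (fun n => by rw [div_eq_mul_inv, inv_pow])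
  have hFV : ∀ x : ℝ, F x
      = (P {ω | (∑' n, (X n ω : ℝ) * (q:ℝ)⁻¹ ^ (n+1)) ≤ x}).toReal := by
    intro x
    rw [hF x]
    congr 2
    ext ω
    simp only [Set.mem_setOf_eq, hYV ω]
  constructor
  · rintro ⟨hind, -⟩ x _
    rw [hFV x, S14.forward P X hq hmeas hval hstat hind x]
    exact Finset.sum_congr rfl (fun j _ => by rw [hFV])
  · intro hfe
    have hfe' : ∀ x ∈ Set.Icc (0:ℝ) 1,
        (P {ω | (∑' n, (X n ω : ℝ) * (q:ℝ)⁻¹ ^ (n+1)) ≤ x}).toReal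
          = ∑ j ∈ Finset.range q, (P {ω | X 0 ω = j}).toReal
              * (P {ω | (∑' n, (X n ω : ℝ) * (q:ℝ)⁻¹ ^ (n+1)) ≤ (q:ℝ)*x - (j:ℝ)}).toReal := by
      intro x hx
      rw [← hFV x, hfe x hx]
      exact Finset.sum_congr rfl (fun j _ => by rw [hFV])
    exact ⟨S14.iIndep_of_fe P X hq hmeas hval hstat hfe',
      S14.marg P X hmeas hstat⟩
end

section
/- Let q = 2 and suppose g : [0,1] → ℝ satisfies g(x) = 0 for x ∈ [0,1/2) and g((x+1)/2) = 2g(x) − 2/(2−x) for all x ∈ [0,1). Then the function f(x) = g(x) + 1/(1−x) on [0,1) satisfies f(x) = (1/2)[f(x/2) + f((x+1)/2)] for all x ∈ [0,1), but f is not Lebesgue integrable on [0,1]. -/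
open MeasureTheory

/-- A solution of the averaging functional equation (for `q = 2`) on `[0,1)` which is not
Lebesgue integrable on `[0,1]`. -/
theorem stmt_16 (g : ℝ → ℝ)
    (hg0 : ∀ x : ℝ, 0 ≤ x → x < 1 / 2 → g x = 0)
    (hgrec : ∀ x : ℝ, 0 ≤ x → x < 1 → g ((x + 1) / 2) = 2 * g x - 2 / (2 - x))
    (f : ℝ → ℝ) (hf : ∀ x, f x = g x + 1 / (1 - x)) :
    (∀ x : ℝ, 0 ≤ x → x < 1 → f x = (f (x / 2) + f ((x + 1) / 2)) / 2) ∧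
      ¬ IntegrableOn f (Set.Icc 0 1) := by
  -- recursion for f
  have hfrec : ∀ y : ℝ, 0 ≤ y → y < 1 → f ((y + 1) / 2) = 2 * f y - 2 / (2 - y) := by
    intro y hy0 hy1
    have h1 : (1:ℝ) - y ≠ 0 := by linarith
    have h2 : (2:ℝ) - y ≠ 0 := by linarith
    rw [hf, hf, hgrec y hy0 hy1]
    have e1 : (1:ℝ) - (y + 1) / 2 = (1 - y) / 2 := by ring
    rw [e1, div_div_eq_mul_div, one_mul]
    rw [show (2:ℝ) / (1 - y) = 2 * (1/(1-y)) by rw [mul_one_div]]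
    ring
  constructor
  · intro x hx0 hx1
    have h1 : (1:ℝ) - x ≠ 0 := by linarith
    have h2 : (2:ℝ) - x ≠ 0 := by linarith
    have hgx2 : g (x / 2) = 0 := hg0 _ (by linarith) (by linarith)
    rw [hfrec x hx0 hx1, hf (x/2), hgx2, hf x]
    have e1 : (1:ℝ) - x / 2 = (2 - x) / 2 := by ring
    rw [e1, div_div_eq_mul_div, one_mul]
    rw [show (2:ℝ) / (2 - x) = 2 * (1/(2-x)) by rw [mul_one_div]]
    ring
  · -- closed form on the dyadic tower
    have key : ∀ (t : ℝ), 11/12 ≤ t → t ≤ 1 → ∀ n : ℕ,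
        f (1 - ((2:ℝ)^n)⁻¹ * t) =
          2^n * (1/t - ∑ k ∈ Finset.range n, 1/(t + 2^k)) := by
      intro t ht1 ht2 n
      induction n with
      | zero =>
        simp only [pow_zero, inv_one, one_mul, Finset.range_zero, Finset.sum_empty, sub_zero]
        rw [hf, hg0 (1 - t) (by linarith) (by linarith)]
        rw [show (1:ℝ) - (1 - t) = t by ring]
        ring
      | succ n ih =>
        have hpow : (0:ℝ) < 2^n := by positivity
        have hple : ((2:ℝ)^n)⁻¹ ≤ 1 := by
          rw [inv_le_one_iff₀]; right; exact one_le_pow₀ (by norm_num)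
        have hy0 : (0:ℝ) ≤ 1 - (2^n)⁻¹ * t := by nlinarith [inv_pos.mpr hpow]
        have hy1 : 1 - ((2:ℝ)^n)⁻¹ * t < 1 := by nlinarith [inv_pos.mpr hpow]
        have hstep := hfrec _ hy0 hy1
        have harg : (1 - ((2:ℝ)^n)⁻¹ * t + 1) / 2 = 1 - ((2:ℝ)^(n+1))⁻¹ * t := by
          rw [pow_succ]; field_simp; ring
        rw [harg] at hstep
        rw [hstep, ih]
        have h2x : (2:ℝ) - (1 - ((2:ℝ)^n)⁻¹ * t) = (2^n + t) / 2^n := by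
          field_simp
          ring
        rw [h2x, Finset.sum_range_succ]
        have hden : (2:ℝ)^n + t ≠ 0 := by positivity
        rw [div_div_eq_mul_div, pow_succ]
        field_simp
        ring
    -- the lower bound on |f| on each strip
    set c : ℝ := 53/990 with hc
    have hbound : ∀ n : ℕ, 4 ≤ n → ∀ y : ℝ,
        1 - ((2:ℝ)^n)⁻¹ ≤ y → y ≤ 1 - 11/12 * ((2:ℝ)^n)⁻¹ → 2^n * c ≤ |f y| := by
      intro n hn y hy1 hy2
      have hpow : (0:ℝ) < 2^n := by positivity
      set t : ℝ := 2^n * (1 - y) with htdef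
      have ht1 : 11/12 ≤ t := by
        have : 11/12 * ((2:ℝ)^n)⁻¹ ≤ 1 - y := by linarith
        calc (11:ℝ)/12 = 2^n * (11/12 * ((2:ℝ)^n)⁻¹) := by field_simp
        _ ≤ t := by rw [htdef]; nlinarith
      have ht2 : t ≤ 1 := by
        have : (1:ℝ) - y ≤ ((2:ℝ)^n)⁻¹ := by linarith
        calc t ≤ 2^n * ((2:ℝ)^n)⁻¹ := by rw [htdef]; nlinarith
        _ = 1 := by field_simp
      have hyt : y = 1 - ((2:ℝ)^n)⁻¹ * t := by
        rw [htdef]; field_simp; ring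
      have hval := key t ht1 ht2 n
      rw [← hyt] at hval
      -- sum estimate
      have hsum4 : (103:ℝ)/90 ≤ ∑ k ∈ Finset.range n, 1/(t + 2^k) := by
        have hsub : Finset.range 4 ⊆ Finset.range n := Finset.range_subset_range.mpr hn
        have hmono : ∑ k ∈ Finset.range 4, 1/(t + 2^k) ≤
            ∑ k ∈ Finset.range n, 1/(t + 2^k) := by
          apply Finset.sum_le_sum_of_subset_of_nonneg hsub
          intro k _ _
          positivity
        refine le_trans ?_ hmono
        have e : ∑ k ∈ Finset.range 4, 1/(t + 2^k)
            = 1/(t+1) + 1/(t+2) + 1/(t+4) + 1/(t+8) := by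
          norm_num [Finset.sum_range_succ]
        rw [e]
        have h1 : (1:ℝ)/2 ≤ 1/(t+1) := by
          rw [div_le_div_iff₀ (by norm_num) (by linarith)]; linarith
        have h2 : (1:ℝ)/3 ≤ 1/(t+2) := by
          rw [div_le_div_iff₀ (by norm_num) (by linarith)]; linarith
        have h3 : (1:ℝ)/5 ≤ 1/(t+4) := by
          rw [div_le_div_iff₀ (by norm_num) (by linarith)]; linarith
        have h4 : (1:ℝ)/9 ≤ 1/(t+8) := by
          rw [div_le_div_iff₀ (by norm_num) (by linarith)]; linarith
        linarith
      have hinv : 1/t ≤ (12:ℝ)/11 := by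
        rw [div_le_div_iff₀ (by linarith) (by norm_num)]; linarith
      have hneg : f y ≤ -(2^n * c) := by
        rw [hval, hc]
        have : 1/t - ∑ k ∈ Finset.range n, 1/(t + 2^k) ≤ -(53/990) := by
          have : (12:ℝ)/11 - 103/90 = -(53/990) := by norm_num
          linarith
        nlinarith
      have : 0 < 2^n * c := by rw [hc]; positivity
      rw [abs_of_nonpos (by linarith)]
      linarith
    -- non-integrability
    intro hint
    have hmeas := hint.2
    replace hmeas : (∫⁻ a in Set.Icc (0:ℝ) 1, (‖f a‖₊ : ENNReal)) < ⊤ := hmeas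
    set S : ℕ → Set ℝ := fun n => Set.Ico (1 - ((2:ℝ)^(n+4))⁻¹) (1 - 11/12 * ((2:ℝ)^(n+4))⁻¹) with hS
    have hSsub : ∀ n, S n ⊆ Set.Icc 0 1 := by
      intro n y hy
      obtain ⟨h1, h2⟩ := hy
      have hpow : (0:ℝ) < 2^(n+4) := by positivity
      have hple : ((2:ℝ)^(n+4))⁻¹ ≤ 1 := by
        rw [inv_le_one_iff₀]; right; exact one_le_pow₀ (by norm_num)
      constructor
      · linarith
      · nlinarith [inv_pos.mpr hpow]
    have hSmeas : ∀ n, MeasurableSet (S n) := fun n => measurableSet_Ico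
    have hSdisj : Pairwise (Function.onFun Disjoint S) := by
      have H : ∀ m n : ℕ, m < n → Disjoint (S m) (S n) := by
        intro m n h
        have hkey : 1 - 11/12 * ((2:ℝ)^(m+4))⁻¹ ≤ 1 - ((2:ℝ)^(n+4))⁻¹ := by
          have h1 : ((2:ℝ)^(n+4))⁻¹ ≤ ((2:ℝ)^(m+5))⁻¹ := by
            apply inv_anti₀ (by positivity)
            apply pow_le_pow_right₀ (by norm_num) (by omega)
          have e : ((2:ℝ)^(m+5))⁻¹ = ((2:ℝ)^(m+4))⁻¹ / 2 := by
            rw [pow_succ]; field_simp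
          have hp : (0:ℝ) < ((2:ℝ)^(m+4))⁻¹ := by positivity
          nlinarith
        simp only [hS]
        rw [Set.Ico_disjoint_Ico]
        exact le_trans inf_le_left (le_trans hkey le_sup_right)
      intro m n hmn
      rcases lt_or_gt_of_ne hmn with h | h
      · exact H m n h
      · exact (H n m h).symm
    -- each strip has lintegral ≥ 53/11880
    have hstrip : ∀ n : ℕ, ENNReal.ofReal (53/11880) ≤ ∫⁻ y in S n, (‖f y‖₊ : ENNReal) := by
      intro n
      have hpow : (0:ℝ) < 2^(n+4) := by positivity
      have hlow : ∀ y ∈ S n, ENNReal.ofReal (2^(n+4) * c) ≤ (‖f y‖₊ : ENNReal) := by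
        intro y hy
        obtain ⟨h1, h2⟩ := hy
        have := hbound (n+4) (by omega) y h1 (le_of_lt h2)
        calc ENNReal.ofReal (2^(n+4) * c) ≤ ENNReal.ofReal |f y| :=
              ENNReal.ofReal_le_ofReal this
        _ = (‖f y‖₊ : ENNReal) := (Real.enorm_eq_ofReal_abs _).symm
      calc ENNReal.ofReal (53/11880)
          = ENNReal.ofReal (2^(n+4) * c) * volume (S n) := by
            rw [hS]
            simp only
            rw [Real.volume_Ico]
            rw [show (1 - 11/12 * ((2:ℝ)^(n+4))⁻¹) - (1 - ((2:ℝ)^(n+4))⁻¹)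
                = ((2:ℝ)^(n+4))⁻¹ * (1/12) by ring]
            rw [← ENNReal.ofReal_mul (by positivity)]
            congr 1
            rw [hc]
            field_simp
            ring
        _ = ∫⁻ _ in S n, ENNReal.ofReal (2^(n+4) * c) := (setLIntegral_const _ _).symm
        _ ≤ ∫⁻ y in S n, (‖f y‖₊ : ENNReal) := setLIntegral_mono' (hSmeas n) hlow
    have htop : (∫⁻ y in Set.Icc (0:ℝ) 1, (‖f y‖₊ : ENNReal)) = ⊤ := by
      have hU : (∫⁻ y in ⋃ n, S n, (‖f y‖₊ : ENNReal)) ≤ ∫⁻ y in Set.Icc (0:ℝ) 1, (‖f y‖₊ : ENNReal) := by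
        apply lintegral_mono_set
        exact Set.iUnion_subset hSsub
      have hsum : (∫⁻ y in ⋃ n, S n, (‖f y‖₊ : ENNReal)) = ∑' n, ∫⁻ y in S n, (‖f y‖₊ : ENNReal) :=
        lintegral_iUnion hSmeas hSdisj _
      have : (⊤ : ENNReal) ≤ ∑' n, ∫⁻ y in S n, (‖f y‖₊ : ENNReal) := by
        calc (⊤ : ENNReal) = ∑' _ : ℕ, ENNReal.ofReal (53/11880) :=
              (ENNReal.tsum_const_eq_top_of_ne_zero (by positivity)).symm
        _ ≤ _ := ENNReal.tsum_le_tsum hstrip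
      have := le_trans (this.trans_eq hsum.symm) hU
      exact top_le_iff.mp this
    rw [htop] at hmeas
    exact (lt_irrefl _ hmeas)
end

section
/- Let q ≥ 2 be an integer and F a CDF on [0,1] satisfying the stationarity functional equation for all x ∈ [0,1]. Then F(j/q) − F(j/q − δ) → 0 as δ ↓ 0 for each j = 1,...,q−1; i.e., F has no jumps at the points 1/q, 2/q, ..., (q−1)/q. -/
open MeasureTheory


open MeasureTheory Filter

lemma diff_toReal (μ : Measure ℝ) [IsProbabilityMeasure μ] {a b : ℝ} (hab : a ≤ b) :
    (μ (Set.Iic b)).toReal - (μ (Set.Iic a)).toReal = (μ (Set.Ioc a b)).toReal := by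
  have h : Set.Iic a ∪ Set.Ioc a b = Set.Iic b := Set.Iic_union_Ioc_eq_Iic hab
  have hd : Disjoint (Set.Iic a) (Set.Ioc a b) := by
    rw [Set.disjoint_left]
    rintro x hx ⟨h1, h2⟩
    exact absurd hx (not_le.2 h1)
  have hu := measure_union (μ := μ) hd measurableSet_Ioc
  rw [h] at hu
  rw [hu, ENNReal.toReal_add (measure_ne_top μ _) (measure_ne_top μ _)]
  ring

lemma no_jump_tendsto (μ : Measure ℝ) [IsProbabilityMeasure μ] {c : ℝ}
    (hc : μ {c} = 0) (F : ℝ → ℝ) (hF : ∀ x, F x = (μ (Set.Iic x)).toReal) :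
    Filter.Tendsto (fun δ : ℝ => F c - F (c - δ))
      (nhdsWithin 0 (Set.Ioi 0)) (nhds 0) := by
  have key : Filter.Tendsto (fun n : ℕ => μ (Set.Ioc (c - 1/(n+1)) c)) atTop (nhds 0) := by
    have h1 : (⋂ n : ℕ, Set.Ioc (c - 1/((n:ℝ)+1)) c) = {c} := by
      ext x
      simp only [Set.mem_iInter, Set.mem_Ioc, Set.mem_singleton_iff]
      constructor
      · intro h
        have hle : x ≤ c := (h 0).2
        have hge : c ≤ x := by
          by_contra hlt
          push_neg at hlt
          obtain ⟨n, hn⟩ := exists_nat_one_div_lt (show (0:ℝ) < c - x by linarith)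
          have := (h n).1
          linarith
        linarith
      · intro h; subst h
        refine fun n => ⟨?_, le_refl _⟩
        have : (0:ℝ) < 1/((n:ℝ)+1) := by positivity
        linarith
    have hanti : Antitone (fun n : ℕ => Set.Ioc (c - 1/((n:ℝ)+1)) c) := by
      intro m n hmn
      apply Set.Ioc_subset_Ioc_left
      have h1 : (1:ℝ)/((n:ℝ)+1) ≤ 1/((m:ℝ)+1) := by
        apply one_div_le_one_div_of_le
        · positivity
        · have : (m:ℝ) ≤ n := Nat.cast_le.2 hmn
          linarith
      linarith
    have := tendsto_measure_iInter_atTop (μ := μ)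
      (s := fun n : ℕ => Set.Ioc (c - 1/((n:ℝ)+1)) c)
      (fun n => measurableSet_Ioc.nullMeasurableSet) hanti ⟨0, measure_ne_top μ _⟩
    rw [h1, hc] at this
    exact this
  rw [Metric.tendsto_nhdsWithin_nhds]
  intro ε hε
  obtain ⟨n, hn⟩ := (ENNReal.tendsto_atTop_zero.mp key) (ENNReal.ofReal (ε/2))
    (by simp; linarith)
  refine ⟨1/((n:ℝ)+1), by positivity, fun δ hδ hdist => ?_⟩
  have hδ0 : (0:ℝ) < δ := hδ
  have hδlt : δ < 1/((n:ℝ)+1) := by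
    rw [Real.dist_eq, sub_zero, abs_of_pos hδ0] at hdist
    exact hdist
  have hmono : μ (Set.Ioc (c - δ) c) ≤ ENNReal.ofReal (ε/2) :=
    le_trans (measure_mono (Set.Ioc_subset_Ioc_left (by linarith))) (hn n le_rfl)
  have heqd : F c - F (c - δ) = (μ (Set.Ioc (c - δ) c)).toReal := by
    rw [hF, hF]
    exact diff_toReal μ (by linarith)
  rw [Real.dist_eq, sub_zero, heqd, abs_of_nonneg ENNReal.toReal_nonneg]
  have := ENNReal.toReal_le_of_le_ofReal (by linarith) hmono
  linarith

theorem stmt_18' (q : ℕ) (hq : 2 ≤ q) (μ : Measure ℝ) [IsProbabilityMeasure μ]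
    (hsupp : μ (Set.Icc 0 1) = 1)
    (F : ℝ → ℝ) (hF : ∀ x, F x = (μ (Set.Iic x)).toReal)
    (heq : ∀ x ∈ Set.Icc (0 : ℝ) 1,
      F x = F 0 + ∑ j ∈ Finset.range q, (F ((x + j) / q) - F ((j : ℝ) / q))) :
    ∀ j : ℕ, 1 ≤ j → j < q → μ {((j:ℝ)/q)} = 0 := by
  intro k hk1 hkq
  have hq0 : (0:ℝ) < q := by
    have : (2:ℝ) ≤ q := by exact_mod_cast hq
    linarith
  have hq1 : (1:ℝ) ≤ q := by exact_mod_cast (by omega : 1 ≤ q)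
  set c : ℝ := (k:ℝ)/q with hc
  set a : ℝ := (μ {c}).toReal with ha
  have ha0 : 0 ≤ a := ENNReal.toReal_nonneg
  have step : ∀ δ : ℝ, 0 < δ → δ ≤ 1 →
      a + (μ (Set.Ioc (1 - δ/q) 1)).toReal ≤ (μ (Set.Ioc (1-δ) 1)).toReal := by
    intro δ hδ0 hδ1
    set t : ℕ → ℝ :=
      fun j => (μ (Set.Ioc ((1 - δ + (j:ℝ)) / q) ((1 + (j:ℝ)) / q))).toReal with ht
    have h1 := heq 1 ⟨by norm_num, le_rfl⟩
    have h2 := heq (1-δ) ⟨by linarith, by linarith⟩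
    have hsum : F 1 - F (1-δ)
        = ∑ j ∈ Finset.range q, (F ((1 + (j:ℝ)) / q) - F ((1 - δ + (j:ℝ)) / q)) := by
      have h3 : F 1 - F (1-δ)
          = (∑ j ∈ Finset.range q, (F ((1 + (j:ℝ)) / q) - F ((j:ℝ) / q)))
            - (∑ j ∈ Finset.range q, (F ((1 - δ + (j:ℝ)) / q) - F ((j:ℝ) / q))) := by
        rw [h1, h2]; ring
      rw [h3, ← Finset.sum_sub_distrib]
      exact Finset.sum_congr rfl fun j _ => by ring
    have hT : ∀ j ∈ Finset.range q,
        F ((1 + (j:ℝ)) / q) - F ((1 - δ + (j:ℝ)) / q) = t j := by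
      intro j _
      rw [ht, hF, hF]
      exact diff_toReal μ ((div_le_div_iff_of_pos_right hq0).2 (by linarith))
    have key : (μ (Set.Ioc (1-δ) 1)).toReal = ∑ j ∈ Finset.range q, t j := by
      rw [← diff_toReal μ (show (1:ℝ)-δ ≤ 1 by linarith), ← hF, ← hF, hsum]
      exact Finset.sum_congr rfl hT
    have hne : k - 1 ≠ q - 1 := by omega
    have hpair : ({k-1, q-1} : Finset ℕ) ⊆ Finset.range q := by
      intro x hx
      simp only [Finset.mem_insert, Finset.mem_singleton] at hx
      rcases hx with h | h <;> subst h <;> exact Finset.mem_range.2 (by omega)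
    have hsum2 : t (k-1) + t (q-1) ≤ ∑ j ∈ Finset.range q, t j := by
      rw [← Finset.sum_pair hne]
      exact Finset.sum_le_sum_of_subset_of_nonneg hpair
        (fun i _ _ => ENNReal.toReal_nonneg)
    have hcast_k : ((k-1:ℕ):ℝ) = (k:ℝ) - 1 := by
      rw [Nat.cast_sub hk1, Nat.cast_one]
    have hcast_q : ((q-1:ℕ):ℝ) = (q:ℝ) - 1 := by
      rw [Nat.cast_sub (by omega), Nat.cast_one]
    have hterm1 : a ≤ t (k-1) := by
      rw [ht, ha]
      apply ENNReal.toReal_mono (measure_ne_top μ _)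
      apply measure_mono
      intro x hx
      rw [Set.mem_singleton_iff] at hx
      subst hx
      rw [hcast_k]
      constructor
      · rw [hc]
        exact (div_lt_div_iff_of_pos_right hq0).2 (by linarith)
      · rw [hc]
        exact (div_le_div_iff_of_pos_right hq0).2 (by linarith)
    have hset : Set.Ioc ((1 - δ + (((q-1:ℕ)):ℝ)) / q) ((1 + (((q-1:ℕ)):ℝ)) / q)
        = Set.Ioc (1 - δ/q) 1 := by
      rw [hcast_q]
      have e1 : (1 - δ + ((q:ℝ) - 1)) / q = 1 - δ/q := by field_simp; ring
      have e2 : (1 + ((q:ℝ) - 1)) / q = 1 := by field_simp; ring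
      rw [e1, e2]
    have hterm2 : t (q-1) = (μ (Set.Ioc (1 - δ/q) 1)).toReal := by
      rw [ht]
      simp only []
      rw [hset]
    rw [key]
    calc a + (μ (Set.Ioc (1 - δ/q) 1)).toReal
        ≤ t (k-1) + t (q-1) := by rw [hterm2]; linarith
      _ ≤ ∑ j ∈ Finset.range q, t j := hsum2
  -- iterate
  have iter : ∀ n : ℕ, (n:ℝ) * a + (μ (Set.Ioc (1 - (1/(q:ℝ))^n) 1)).toReal
      ≤ (μ (Set.Ioc (0:ℝ) 1)).toReal := by
    intro n
    induction n with
    | zero => simp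
    | succ n ih =>
      have hpow0 : (0:ℝ) < (1/(q:ℝ))^n := by positivity
      have hpow1 : (1/(q:ℝ))^n ≤ 1 := pow_le_one₀ (by positivity) (by
        rw [div_le_one hq0]; linarith)
      have hstep := step ((1/(q:ℝ))^n) hpow0 hpow1
      have hrw : (1/(q:ℝ))^n / q = (1/(q:ℝ))^(n+1) := by
        rw [pow_succ]; ring
      rw [hrw] at hstep
      push_cast
      linarith
  have hbound : ∀ n : ℕ, (n:ℝ) * a ≤ 1 := by
    intro n
    have h1 := iter n
    have h2 : (μ (Set.Ioc (0:ℝ) 1)).toReal ≤ 1 := by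
      rw [← ENNReal.toReal_one]
      exact ENNReal.toReal_mono (by simp) prob_le_one
    have h3 : 0 ≤ (μ (Set.Ioc (1 - (1/(q:ℝ))^n) 1)).toReal := ENNReal.toReal_nonneg
    linarith
  have haz : a = 0 := by
    by_contra hne
    have hpos : 0 < a := lt_of_le_of_ne ha0 (Ne.symm hne)
    obtain ⟨n, hn⟩ := exists_nat_gt (1/a)
    have := hbound n
    have : (1:ℝ) < n * a := by
      rw [div_lt_iff₀ hpos] at hn
      linarith
    linarith
  rw [ha] at haz
  rcases ENNReal.toReal_eq_zero_iff _ |>.1 haz with h | h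
  · exact h
  · exact absurd h (measure_ne_top μ _)

/-- A CDF satisfying the stationarity functional equation has no jumps at the points
`j/q`, `j = 1, …, q−1`. -/
theorem stmt_18 (q : ℕ) (hq : 2 ≤ q) (μ : Measure ℝ) [IsProbabilityMeasure μ]
    (hsupp : μ (Set.Icc 0 1) = 1)
    (F : ℝ → ℝ) (hF : ∀ x, F x = (μ (Set.Iic x)).toReal)
    (heq : ∀ x ∈ Set.Icc (0 : ℝ) 1,
      F x = F 0 + ∑ j ∈ Finset.range q, (F ((x + j) / q) - F ((j : ℝ) / q))) :
    ∀ j : ℕ, 1 ≤ j → j < q →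
      Filter.Tendsto (fun δ : ℝ => F ((j : ℝ) / q) - F ((j : ℝ) / q - δ))
        (nhdsWithin 0 (Set.Ioi 0)) (nhds 0) := by
  intro j hj1 hjq
  exact no_jump_tendsto μ (stmt_18' q hq μ hsupp F hF heq j hj1 hjq) F hF
end
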